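/- arXiv:2208.14688 — 4 statements merged into one kernel-verified Lean document; each statement's English description precedes it below -/
import Mathlib

section
/- Let O be a one-dimensional noetherian domain with field of fractions K, with normalization Õ finite over O, and let O' be a subring with O ⊆ O' ⊆ Õ. If a ∈ K* is a unit in the localization Õ_p of the normalization at a maximal ideal p of O, then ord_p(a) = 0, where ord_p(a/b) = len(O_p/aO_p) − len(O_p/bO_p) for a,b ∈ O nonzero. -/
set_option maxHeartbeats 1000000
set_option synthInstance.maxHeartbeats 400000

noncomputable section
namespace ChowPaper


open scoped nonZeroDivisors

/-- Composition length of the `Localization.AtPrime p`-module `O_p / a O_p`. -/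
def lenQ (R : Type*) [CommRing R] (p : Ideal R) [p.IsPrime] (a : R) : ℕ :=
  ((WithBot.unbotD 0 (Order.krullDim (Submodule (Localization.AtPrime p)
    ((Localization.AtPrime p) ⧸
      (Ideal.span {algebraMap R (Localization.AtPrime p) a}))))).toNat)

/-- `ord_p(x)` for `x = a/b` in the fraction field, defined as
`len(R_p/aR_p) - len(R_p/bR_p)` via a choice of representation `x = a/b`. -/
def ord (R : Type*) [CommRing R] (K : Type*) [Field K] [Algebra R K]
    (p : Ideal R) [p.IsPrime] (x : K) : ℤ :=
  letI := Classical.dec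
  if h : ∃ ab : R × R, ab.2 ≠ 0 ∧ x * algebraMap R K ab.2 = algebraMap R K ab.1 then
    (lenQ R p h.choose.1 : ℤ) - (lenQ R p h.choose.2 : ℤ)
  else 0

/-- The residue degree `[O'/P : O/(P ∩ O)]`. -/
def resDeg (O O' : Type*) [CommRing O] [CommRing O'] [Algebra O O'] (P : Ideal O') : ℕ :=
  letI : Algebra (O ⧸ P.comap (algebraMap O O')) (O' ⧸ P) :=
    (Ideal.quotientMap P (algebraMap O O') le_rfl).toAlgebra
  Module.finrank (O ⧸ P.comap (algebraMap O O')) (O' ⧸ P)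

/-- The group of divisors: the free abelian group on the maximal ideals. -/
abbrev Div (R : Type*) [CommRing R] : Type _ := MaximalSpectrum R →₀ ℤ

/-- The subgroup of principal divisors. -/
def prin (R : Type*) [CommRing R] (K : Type*) [Field K] [Algebra R K] :
    AddSubgroup (Div R) :=
  AddSubgroup.closure {D : Div R | ∃ a : K, a ≠ 0 ∧
    ∀ p : MaximalSpectrum R, D p = @ord R _ K _ _ p.asIdeal p.2.isPrime a}

/-- The Chow group: divisors modulo principal divisors. -/
abbrev Chow (R : Type*) [CommRing R] (K : Type*) [Field K] [Algebra R K] : Type _ :=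
  Div R ⧸ prin R K


open scoped nonZeroDivisors



section LengthTheory

open Order

def lenO (α : Type*) [Preorder α] : ℕ∞ := ⨆ (p : LTSeries α), (p.length : ℕ∞)

lemma lenO_krull (α : Type*) [Preorder α] [Nonempty α] :
    WithBot.unbotD 0 (Order.krullDim α) = lenO α := by
  rw [Order.krullDim_eq_iSup_length, lenO, WithBot.unbotD_coe]

lemma lenO_le_of_strictMono {α β : Type*} [Preorder α] [Preorder β] (f : α → β)
    (hf : StrictMono f) : lenO α ≤ lenO β :=
  iSup_le fun p => le_iSup_of_le (p.map f hf) (by simp)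

lemma lenO_orderIso {α β : Type*} [Preorder α] [Preorder β] (f : α ≃o β) : lenO α = lenO β :=
  le_antisymm (lenO_le_of_strictMono f f.strictMono)
    (lenO_le_of_strictMono f.symm f.symm.strictMono)

lemma height_le_lenO {α : Type*} [Preorder α] (a : α) : Order.height a ≤ lenO α :=
  Order.height_le fun p _ => le_iSup_of_le p le_rfl

lemma lenO_subsingleton {α : Type*} [Preorder α] [Subsingleton α] : lenO α = 0 := by
  refine le_antisymm (iSup_le fun p => ?_) (by simp)
  have : p.length = 0 := by
    by_contra h
    have h1 : (0 : Fin (p.length + 1)) < ⟨p.length, by omega⟩ := by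
      simp [Fin.lt_def]; omega
    exact absurd (Subsingleton.elim (p.toFun 0) (p.toFun ⟨p.length, by omega⟩))
      (p.strictMono h1).ne
  simp [this]

lemma length_le_height_prod {α β : Type*} [Preorder α] [Preorder β] (p : LTSeries (α × β)) :
    (p.length : ℕ∞) ≤ Order.height p.last.1 + Order.height p.last.2 := by
  suffices H : ∀ (n : ℕ) (p : LTSeries (α × β)), p.length = n →
      (p.length : ℕ∞) ≤ Order.height p.last.1 + Order.height p.last.2 by
    exact H p.length p rfl
  intro n
  induction n with
  | zero => intro p hn; simp [hn]
  | succ n ih =>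
    intro p hn
    have hne : p.length ≠ 0 := by omega
    have hlt := p.eraseLast_last_rel_last hne
    have hlen : p.eraseLast.length = n := by
      simp only [RelSeries.eraseLast_length, hn]; omega
    have IH := ih p.eraseLast hlen
    rw [hlen] at IH
    by_cases htop : Order.height p.last.1 = ⊤ ∨ Order.height p.last.2 = ⊤
    · rcases htop with h | h <;> simp [h]
    push_neg at htop
    obtain ⟨h1, h2⟩ := htop
    rw [hn]
    push_cast
    rcases Prod.lt_iff.mp hlt with ⟨ha, hb⟩ | ⟨ha, hb⟩
    · have hfin : Order.height p.eraseLast.last.1 < ⊤ :=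
        lt_of_le_of_lt (Order.height_mono ha.le) (lt_top_iff_ne_top.mpr h1)
      have hstep : Order.height p.eraseLast.last.1 + 1 ≤ Order.height p.last.1 :=
        Order.add_one_le_of_lt (Order.height_strictMono ha hfin)
      calc (n : ℕ∞) + 1 ≤ (Order.height p.eraseLast.last.1 + Order.height p.eraseLast.last.2) + 1 := by
            gcongr
        _ = (Order.height p.eraseLast.last.1 + 1) + Order.height p.eraseLast.last.2 := by ring
        _ ≤ Order.height p.last.1 + Order.height p.last.2 := by gcongr
    · have hfin : Order.height p.eraseLast.last.2 < ⊤ :=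
        lt_of_le_of_lt (Order.height_mono hb.le) (lt_top_iff_ne_top.mpr h2)
      have hstep : Order.height p.eraseLast.last.2 + 1 ≤ Order.height p.last.2 :=
        Order.add_one_le_of_lt (Order.height_strictMono hb hfin)
      calc (n : ℕ∞) + 1 ≤ (Order.height p.eraseLast.last.1 + Order.height p.eraseLast.last.2) + 1 := by
            gcongr
        _ = Order.height p.eraseLast.last.1 + (Order.height p.eraseLast.last.2 + 1) := by ring
        _ ≤ Order.height p.last.1 + Order.height p.last.2 := by gcongr


lemma lenO_modular {α : Type*} [Lattice α] [IsModularLattice α] (a : α) :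
    lenO α = lenO {x : α // x ≤ a} + lenO {x : α // a ≤ x} := by
  apply le_antisymm
  · refine iSup_le fun p => ?_
    have hf : StrictMono (fun x : α =>
        ((⟨x ⊓ a, inf_le_right⟩ : {x : α // x ≤ a}), (⟨x ⊔ a, le_sup_right⟩ : {x : α // a ≤ x}))) := by
      intro x y hxy
      have h := strictMono_inf_prod_sup (α := α) (z := a) hxy
      rw [Prod.lt_iff] at h ⊢
      rcases h with ⟨h1, h2⟩ | ⟨h1, h2⟩
      · exact Or.inl ⟨Subtype.mk_lt_mk.mpr h1, Subtype.mk_le_mk.mpr h2⟩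
      · exact Or.inr ⟨Subtype.mk_le_mk.mpr h1, Subtype.mk_lt_mk.mpr h2⟩
    have h := length_le_height_prod (p.map _ hf)
    simp only [LTSeries.map_length] at h
    exact h.trans (add_le_add (height_le_lenO _) (height_le_lenO _))
  · haveI : Nonempty (LTSeries {x : α // x ≤ a}) := ⟨RelSeries.singleton _ ⟨a, le_rfl⟩⟩
    haveI : Nonempty (LTSeries {x : α // a ≤ x}) := ⟨RelSeries.singleton _ ⟨a, le_rfl⟩⟩
    rw [lenO, lenO, ENat.iSup_add]
    refine iSup_le fun p => ?_
    rw [ENat.add_iSup]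
    refine iSup_le fun q => ?_
    have hP : StrictMono (fun x : {x : α // x ≤ a} => (x : α)) := fun _ _ h => h
    have hQ : StrictMono (fun x : {x : α // a ≤ x} => (x : α)) := fun _ _ h => h
    rcases Nat.eq_zero_or_pos q.length with h0 | hpos
    · rw [h0]
      simpa [lenO] using le_iSup_of_le (p.map _ hP) (by simp)
    · have h1a : 1 < q.length + 1 := by omega
      set Q := (q.map _ hQ).drop ⟨1, by simpa using h1a⟩ with hQdef
      have i0 : Fin (q.length + 1) := ⟨0, by omega⟩
      have hconn : (p.map _ hP).last < Q.head := by
        set j0 : Fin (q.length + 1) := ⟨0, by omega⟩ with hj0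
        set j1 : Fin (q.length + 1) := ⟨1, h1a⟩ with hj1
        have h01 : ((q j0 : {x : α // a ≤ x}) : α) < ((q j1 : {x : α // a ≤ x}) : α) := by
          exact_mod_cast q.strictMono (show j0 < j1 by simp [hj0, hj1, Fin.lt_def])
        have hle : ((p.last : {x : α // x ≤ a}) : α) ≤ a := p.last.2
        have hge : a ≤ ((q j0 : {x : α // a ≤ x}) : α) := (q j0).2
        have hQh : Q.head = ((q j1 : {x : α // a ≤ x}) : α) := by
          rw [hQdef, RelSeries.head_drop]; rfl
        have hlast : (p.map _ hP).last = ((p.last : {x : α // x ≤ a}) : α) := rfl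
        rw [hQh, hlast]
        exact lt_of_le_of_lt (hle.trans hge) h01
      refine le_trans ?_ (le_iSup _ ((p.map _ hP).append Q hconn))
      have hlen : ((p.map _ hP).append Q hconn).length = p.length + q.length := by
        rw [RelSeries.append_length]
        simp [hQdef]
        omega
      rw [hlen]
      push_cast
      rfl

section MLen
variable {R : Type*} [Ring R]

def mlen (R : Type*) [Ring R] (M : Type*) [AddCommGroup M] [Module R M] : ℕ∞ :=
  lenO (Submodule R M)

lemma mlen_congr {M M₂ : Type*} [AddCommGroup M] [Module R M] [AddCommGroup M₂] [Module R M₂]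
    (e : M ≃ₗ[R] M₂) : mlen R M = mlen R M₂ :=
  lenO_orderIso (Submodule.orderIsoMapComap e)

lemma mlen_add {M : Type*} [AddCommGroup M] [Module R M] (N : Submodule R M) :
    mlen R M = mlen R N + mlen R (M ⧸ N) := by
  rw [mlen, lenO_modular N]
  congr 1
  · exact (lenO_orderIso (Submodule.MapSubtype.orderIso N)).symm
  · exact (lenO_orderIso (Submodule.comapMkQRelIso N)).symm

/-- length of subquotient Q / P -/
def qlen {W : Type*} [AddCommGroup W] [Module R W] (Q P : Submodule R W) : ℕ∞ :=
  mlen R (↥Q ⧸ P.comap Q.subtype)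

lemma qlen_add {W : Type*} [AddCommGroup W] [Module R W] {P Q N : Submodule R W}
    (hPQ : P ≤ Q) (hQN : Q ≤ N) : qlen N P = qlen N Q + qlen Q P := by
  classical
  set S : Submodule R N := P.comap N.subtype with hS
  set T : Submodule R N := Q.comap N.subtype with hT
  have hST : S ≤ T := Submodule.comap_mono hPQ
  rw [add_comm, qlen, mlen_add (T.map S.mkQ)]
  congr 1
  · -- mlen ↥(T.map S.mkQ) = qlen Q P
    set g : ↥T →ₗ[R] (↥N ⧸ S) := S.mkQ.comp T.subtype with hg
    have hker : LinearMap.ker g = S.comap T.subtype := by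
      rw [hg, LinearMap.ker_comp, Submodule.ker_mkQ]
    have hrange : LinearMap.range g = T.map S.mkQ := by
      rw [hg, LinearMap.range_comp, Submodule.range_subtype]
    have hmape2 : (S.comap T.subtype).map
        ((Submodule.comapSubtypeEquivOfLe hQN : ↥T ≃ₗ[R] ↥Q) : ↥T →ₗ[R] ↥Q)
        = P.comap Q.subtype := by
      ext x
      simp only [Submodule.mem_map, Submodule.mem_comap]
      constructor
      · rintro ⟨y, hy, rfl⟩
        exact hy
      · intro hx
        refine ⟨⟨⟨(x : W), hQN x.2⟩, x.2⟩, ?_, ?_⟩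
        · exact hx
        · exact Subtype.ext rfl
    have e3 : ↥(T.map S.mkQ) ≃ₗ[R] (↥Q ⧸ P.comap Q.subtype) :=
      (LinearEquiv.ofEq _ _ hrange.symm).trans <|
        (g.quotKerEquivRange.symm).trans <|
          ((Submodule.quotEquivOfEq _ _ hker)).trans <|
            (Submodule.Quotient.equiv (S.comap T.subtype) (P.comap Q.subtype)
              (Submodule.comapSubtypeEquivOfLe hQN) hmape2)
    exact mlen_congr e3
  · -- mlen ((N⧸S) ⧸ T.map S.mkQ) = qlen N Q
    exact mlen_congr (Submodule.quotientQuotientEquivQuotient S T hST)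

lemma qlen_map {W W₂ : Type*} [AddCommGroup W] [Module R W] [AddCommGroup W₂] [Module R W₂]
    (e : W ≃ₗ[R] W₂) (Q P : Submodule R W) :
    qlen (Q.map (e : W →ₗ[R] W₂)) (P.map (e : W →ₗ[R] W₂)) = qlen Q P := by
  have hmap : (P.comap Q.subtype).map
      ((e.submoduleMap Q : ↥Q ≃ₗ[R] ↥(Q.map (e : W →ₗ[R] W₂))) :
        ↥Q →ₗ[R] ↥(Q.map (e : W →ₗ[R] W₂)))
      = (P.map (e : W →ₗ[R] W₂)).comap (Q.map (e : W →ₗ[R] W₂)).subtype := by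
    ext x
    simp only [Submodule.mem_map, Submodule.mem_comap]
    constructor
    · rintro ⟨y, hy, rfl⟩
      exact ⟨(y : W), hy, by simp⟩
    · rintro ⟨w, hw, hwx⟩
      obtain ⟨w', hw', hwx'⟩ := x.2
      have hww : w = w' := e.injective (hwx.trans hwx'.symm)
      have hwQ : w ∈ Q := hww ▸ hw'
      refine ⟨⟨w, hwQ⟩, hw, ?_⟩
      apply Subtype.ext
      simpa using hwx
  exact (mlen_congr (Submodule.Quotient.equiv (P.comap Q.subtype) _ (e.submoduleMap Q) hmap)).symm


end MLen

lemma mlen_lt_top_of_torsionBy_maximal {R : Type*} [CommRing R] (I : Ideal R) [I.IsMaximal]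
    (M : Type*) [AddCommGroup M] [Module R M] [Module.Finite R M]
    (htor : ∀ c ∈ I, ∀ x : M, c • x = 0) : mlen R M < ⊤ := by
  have hT : Module.IsTorsionBySet R M I := fun x c => htor c.1 c.2 x
  letI : Module (R ⧸ I) M := hT.module
  haveI : IsScalarTower R (R ⧸ I) M := hT.isScalarTower
  letI : Field (R ⧸ I) := Ideal.Quotient.field I
  haveI : Module.Finite (R ⧸ I) M := Module.Finite.of_restrictScalars_finite R (R ⧸ I) M
  haveI : FiniteDimensional (R ⧸ I) M := inferInstance
  have hG : ∀ S : Submodule R M, (Submodule.span (R ⧸ I) (S : Set M) : Set M) = S := by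
    intro S
    apply subset_antisymm ?_ Submodule.subset_span
    intro x hx
    induction hx using Submodule.span_induction with
    | mem x hx => exact hx
    | zero => exact S.zero_mem
    | add x y _ _ hx hy => exact S.add_mem hx hy
    | smul q x _ hx =>
      obtain ⟨c, rfl⟩ := Ideal.Quotient.mk_surjective q
      rw [hT.mk_smul]
      exact S.smul_mem c hx
  have hmono : StrictMono (fun S : Submodule R M =>
      Module.finrank (R ⧸ I) (Submodule.span (R ⧸ I) (S : Set M))) := by
    intro S S' h
    apply Submodule.finrank_lt_finrank_of_lt
    refine lt_of_le_of_ne (Submodule.span_mono h.le) (fun hEq => h.ne ?_)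
    apply SetLike.ext'
    rw [← hG S, ← hG S', hEq]
  refine lt_of_le_of_lt (iSup_le fun p => ?_)
    (WithTop.coe_lt_top (Module.finrank (R ⧸ I) M))
  have := (p.map _ hmono)
  have hlast := LTSeries.head_add_length_le_nat (p.map _ hmono)
  have hle : (p.map _ hmono).last ≤ Module.finrank (R ⧸ I) M := Submodule.finrank_le _
  have hlen : (p.map _ hmono).length = p.length := rfl
  have : p.length ≤ Module.finrank (R ⧸ I) M := by omega
  exact_mod_cast Nat.cast_le.mpr this

lemma mlen_lt_top_of_pow_torsion {R : Type*} [CommRing R] [IsNoetherianRing R]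
    (I : Ideal R) [I.IsMaximal] (n : ℕ) (M : Type*) [AddCommGroup M] [Module R M]
    [Module.Finite R M] (h : ∀ c ∈ I ^ n, ∀ x : M, c • x = 0) : mlen R M < ⊤ := by
  induction n generalizing M with
  | zero =>
    have h0 : ∀ x : M, x = 0 := fun x => by simpa using h 1 (by simp) x
    haveI : Subsingleton M := ⟨fun a b => by rw [h0 a, h0 b]⟩
    haveI : Subsingleton (Submodule R M) := by
      constructor
      intro S S'
      ext x
      simp [h0 x]
    rw [mlen, lenO_subsingleton]
    exact ENat.top_pos
  | succ n ih =>
    set N : Submodule R M := I • ⊤ with hN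
    haveI : IsNoetherian R M := isNoetherian_of_isNoetherianRing_of_finite R M
    haveI : Module.Finite R ↥N := Module.Finite.iff_fg.mpr (IsNoetherian.noetherian N)
    rw [mlen_add N]
    have h1 : mlen R ↥N < ⊤ := by
      apply ih
      intro c hc y
      apply Subtype.ext
      show c • (y : M) = 0
      refine Submodule.smul_induction_on y.2 ?_ ?_
      · intro r hr m _
        rw [smul_smul]
        exact h (c * r) (by rw [pow_succ]; exact Ideal.mul_mem_mul hc hr) m
      · intro m₁ m₂ h₁ h₂
        rw [smul_add, h₁, h₂, add_zero]
    have h2 : mlen R (M ⧸ N) < ⊤ := by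
      apply mlen_lt_top_of_torsionBy_maximal I (M ⧸ N)
      intro c hc q
      obtain ⟨m, rfl⟩ := Submodule.Quotient.mk_surjective N q
      rw [← Submodule.Quotient.mk_smul, Submodule.Quotient.mk_eq_zero]
      exact Submodule.smul_mem_smul hc trivial
    exact ENat.add_lt_top.mpr ⟨h1, h2⟩

/-- Multiplication by a nonzero element of a field as a linear equivalence. -/
def mulEquiv {A K : Type*} [CommSemiring A] [Field K] [Algebra A K] (x : K) (hx : x ≠ 0) :
    K ≃ₗ[A] K :=
  LinearEquiv.ofLinear (LinearMap.mulLeft A x) (LinearMap.mulLeft A x⁻¹)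
    (by ext y; simp [← mul_assoc, mul_inv_cancel₀ hx])
    (by ext y; simp [← mul_assoc, inv_mul_cancel₀ hx])

lemma mulEquiv_coe {A K : Type*} [CommSemiring A] [Field K] [Algebra A K] (x : K) (hx : x ≠ 0) :
    (mulEquiv (A := A) x hx : K →ₗ[A] K) = LinearMap.mulLeft A x := rfl


end LengthTheory

theorem stmt0 (O : Type*) [CommRing O] [IsDomain O] [IsNoetherianRing O] [Ring.DimensionLEOne O]
    (K : Type*) [Field K] [Algebra O K] [IsFractionRing O K]
    [Module.Finite O (integralClosure O K)]
    (O' : Subalgebra O K) (hO' : O' ≤ integralClosure O K)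
    (p : Ideal O) (hp : p.IsMaximal)
    (a : K) (ha : a ≠ 0)
    (h1 : ∃ s : O, s ∉ p ∧ algebraMap O K s * a ∈ integralClosure O K)
    (h2 : ∃ t : O, t ∉ p ∧ algebraMap O K t * a⁻¹ ∈ integralClosure O K) :
    @ord O _ K _ _ p hp.isPrime a = 0 := by
  classical
  haveI hpP : p.IsPrime := hp.isPrime
  -- the existential in `ord` holds
  have hex : ∃ ab : O × O, ab.2 ≠ 0 ∧ a * algebraMap O K ab.2 = algebraMap O K ab.1 := by
    obtain ⟨x, y, hy, hxy⟩ := IsFractionRing.div_surjective (A := O) a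
    refine ⟨(x, y), ?_, ?_⟩
    · rw [mem_nonZeroDivisors_iff_ne_zero] at hy
      exact hy
    · have hy0 : algebraMap O K y ≠ 0 := fun h0 => by
        rw [mem_nonZeroDivisors_iff_ne_zero] at hy
        exact hy ((IsFractionRing.to_map_eq_zero_iff (K := K)).mp h0)
      rw [← hxy]
      field_simp
  rw [ord, dif_pos hex]
  obtain ⟨hd, heq⟩ := hex.choose_spec
  set c : O := hex.choose.1 with hc
  set d : O := hex.choose.2 with hdd
  -- basic nonvanishing
  have hdK : algebraMap O K d ≠ 0 :=
    fun h0 => hd ((IsFractionRing.to_map_eq_zero_iff (K := K)).mp h0)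
  have hcK : algebraMap O K c ≠ 0 := by
    rw [← heq]
    exact mul_ne_zero ha hdK
  have hc0 : c ≠ 0 := fun h0 => hcK (by rw [h0, map_zero])
  suffices hlen : lenQ O p c = lenQ O p d by rw [hlen, sub_self]
  -- set up the localization A and its embedding into K
  set A := Localization.AtPrime p with hA
  letI : Algebra A K := IsLocalization.localizationAlgebraOfSubmonoidLe A K
    p.primeCompl (nonZeroDivisors O) p.primeCompl_le_nonZeroDivisors
  haveI : IsScalarTower O A K := IsLocalization.localization_isScalarTower_of_submonoid_le A K
    p.primeCompl (nonZeroDivisors O) p.primeCompl_le_nonZeroDivisors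
  haveI : IsFractionRing A K := IsFractionRing.isFractionRing_of_isLocalization
    p.primeCompl A K p.primeCompl_le_nonZeroDivisors
  haveI : IsNoetherianRing A := IsLocalization.isNoetherianRing p.primeCompl A inferInstance
  have hinj : Function.Injective (algebraMap A K) := IsFractionRing.injective A K
  set lin : A →ₗ[A] K := Algebra.linearMap A K with hlin
  set AA : Submodule A K := LinearMap.range lin with hAA
  set MM : Submodule A K := Submodule.span A ((integralClosure O K : Subalgebra O K) : Set K)
    with hMM

  -- multiplication by elements of O preserves any A-submodule of K
  have hstable : ∀ (x : O) (Q : Submodule A K),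
      Submodule.map (LinearMap.mulLeft A (algebraMap O K x)) Q ≤ Q := by
    rintro x Q z ⟨w, hw, rfl⟩
    have hxw : (LinearMap.mulLeft A (algebraMap O K x)) w = (algebraMap O A x) • w := by
      rw [LinearMap.mulLeft_apply, Algebra.smul_def, ← IsScalarTower.algebraMap_apply]
    rw [hxw]
    exact Q.smul_mem _ hw
  have hAAle : AA ≤ MM := by
    rintro z ⟨y, rfl⟩
    have h1' : lin y = y • (1 : K) := by
      rw [hlin, Algebra.linearMap_apply, Algebra.algebraMap_eq_smul_one]
    rw [h1']
    exact MM.smul_mem y (Submodule.subset_span (integralClosure O K).one_mem)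
  -- multiplication stability via denominators
  have hsmul : ∀ x : K, (∃ s : O, s ∉ p ∧ algebraMap O K s * x ∈ integralClosure O K) →
      Submodule.map (LinearMap.mulLeft A x) MM ≤ MM := by
    rintro x ⟨s, hs, hsx⟩
    rw [Submodule.map_le_iff_le_comap, hMM, Submodule.span_le]
    intro b hb
    simp only [SetLike.mem_coe, Submodule.mem_comap, LinearMap.mulLeft_apply]
    set u : A := IsLocalization.mk' A (1 : O) (⟨s, hs⟩ : p.primeCompl) with hu
    have hus : u * algebraMap O A s = 1 := by
      rw [hu, IsLocalization.mk'_spec, map_one]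
    have hx2 : x * b = u • ((algebraMap O K s * x) * b) := by
      rw [Algebra.smul_def]
      have h1' : (algebraMap A K u) * algebraMap O K s = 1 := by
        rw [IsScalarTower.algebraMap_apply O A K, ← map_mul, hus, map_one]
      calc x * b = ((algebraMap A K u) * algebraMap O K s) * (x * b) := by rw [h1', one_mul]
        _ = algebraMap A K u * (algebraMap O K s * x * b) := by ring
    rw [hx2]
    exact MM.smul_mem u (Submodule.subset_span ((integralClosure O K).mul_mem hsx hb))
  have haMM : Submodule.map (LinearMap.mulLeft A a) MM = MM := by
    apply le_antisymm (hsmul a h1)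
    intro m hm
    refine ⟨a⁻¹ * m, hsmul a⁻¹ h2 ⟨m, hm, rfl⟩, ?_⟩
    rw [LinearMap.mulLeft_apply, ← mul_assoc, mul_inv_cancel₀ ha, one_mul]
  have hmulsplit : ∀ (x y : K) (Q : Submodule A K),
      Submodule.map (LinearMap.mulLeft A (x * y)) Q
      = Submodule.map (LinearMap.mulLeft A x) (Submodule.map (LinearMap.mulLeft A y) Q) := by
    intro x y Q
    rw [show LinearMap.mulLeft A (x * y) = (LinearMap.mulLeft A x) ∘ₗ (LinearMap.mulLeft A y) by
      ext w; simp [mul_assoc]]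
    exact Submodule.map_comp _ _ Q
  have hcdMM : Submodule.map (LinearMap.mulLeft A (algebraMap O K c)) MM
      = Submodule.map (LinearMap.mulLeft A (algebraMap O K d)) MM := by
    have hca : algebraMap O K c = algebraMap O K d * a := by rw [← heq]; ring
    rw [hca, hmulsplit, haMM]
  -- MM is a finite A-module
  obtain ⟨sgen, hsgen⟩ := Module.Finite.fg_top (R := O) (M := ↥(integralClosure O K))
  have hMMspan : MM = Submodule.span A
      ((fun y : ↥(integralClosure O K) => (y : K)) '' (sgen : Set ↥(integralClosure O K))) := by
    have hset : ((integralClosure O K : Subalgebra O K) : Set K)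
        = ((Submodule.span O ((fun y : ↥(integralClosure O K) => (y : K)) ''
            (sgen : Set ↥(integralClosure O K)))) : Set K) := by
      have hj := congrArg (Submodule.map (integralClosure O K).toSubmodule.subtype) hsgen
      rw [Submodule.map_span, Submodule.map_top, Submodule.range_subtype] at hj
      have hfun : (fun y : ↥(integralClosure O K) => (y : K))
          = ⇑(Subalgebra.toSubmodule (integralClosure O K)).subtype := rfl
      rw [hfun, hj]
      rfl
    rw [hMM, hset, Submodule.span_span_of_tower]
  haveI hMMfin : Module.Finite A ↥MM := by
    rw [Module.Finite.iff_fg, hMMspan]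
    exact Submodule.fg_span ((sgen : Set ↥(integralClosure O K)).toFinite.image _)
  -- common denominator
  obtain ⟨r, hr⟩ := IsLocalization.exist_integer_multiples (nonZeroDivisors O) sgen
    (fun y : ↥(integralClosure O K) => (y : K))
  have hrMM : ∀ m ∈ MM, algebraMap O K (r : O) * m ∈ AA := by
    intro m hm
    rw [hMMspan] at hm
    induction hm using Submodule.span_induction with
    | mem z hz =>
      obtain ⟨i, hi, rfl⟩ := hz
      obtain ⟨o, ho⟩ := hr i hi
      have : algebraMap O K (r : O) * (i : K) = algebraMap A K (algebraMap O A o) := by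
        rw [← IsScalarTower.algebraMap_apply, ho, Algebra.smul_def]
      rw [this]
      exact ⟨algebraMap O A o, rfl⟩
    | zero => rw [mul_zero]; exact AA.zero_mem
    | add z w _ _ hz hw => rw [mul_add]; exact AA.add_mem hz hw
    | smul q z _ hz =>
      rw [mul_smul_comm]
      exact AA.smul_mem q hz
  -- finiteness of the quotient MM / AA
  have hfinite : qlen MM AA < ⊤ := by
    have hr0 : (r : O) ≠ 0 := mem_nonZeroDivisors_iff_ne_zero.mp r.2
    have hrad : IsLocalRing.maximalIdeal A ≤ (Ideal.span {algebraMap O A (r : O)}).radical := by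
      intro z hz
      rw [Ideal.radical_eq_sInf]
      refine Ideal.mem_sInf.mpr ?_
      rintro q ⟨hq1, hq2⟩
      haveI := hq2
      have hrq : algebraMap O A (r : O) ∈ q := hq1 (Ideal.subset_span rfl)
      have hq0P : (q.comap (algebraMap O A)).IsPrime := hq2.comap _
      have hq0ne : q.comap (algebraMap O A) ≠ ⊥ := fun h0 => by
        have hrq0 : (r : O) ∈ q.comap (algebraMap O A) := hrq
        rw [h0] at hrq0
        exact hr0 ((Submodule.mem_bot O).mp hrq0)
      have hq0max : (q.comap (algebraMap O A)).IsMaximal :=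
        Ring.DimensionLEOne.maximalOfPrime hq0ne hq0P
      have hq0lep : q.comap (algebraMap O A) ≤ p := by
        intro w hw
        by_contra hwp
        exact hq2.ne_top (q.eq_top_of_isUnit_mem hw (IsLocalization.map_units A
          (⟨w, hwp⟩ : p.primeCompl)))
      have hq0p : q.comap (algebraMap O A) = p := hq0max.eq_of_le hp.ne_top hq0lep
      have hqmax : q = IsLocalRing.maximalIdeal A := by
        rw [← IsLocalization.map_comap p.primeCompl A q]
        change Ideal.map (algebraMap O A) (q.comap (algebraMap O A)) = _
        rw [hq0p,
          Localization.AtPrime.map_eq_maximalIdeal]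
      rw [hqmax]
      exact hz
    obtain ⟨n, hn⟩ := Ideal.exists_pow_le_of_le_radical_of_fg hrad (IsNoetherian.noetherian _)
    have htor : ∀ cc ∈ (IsLocalRing.maximalIdeal A) ^ n,
        ∀ x : (↥MM ⧸ AA.comap MM.subtype), cc • x = 0 := by
      intro cc hcc x
      obtain ⟨z, rfl⟩ := Ideal.mem_span_singleton.mp (hn hcc)
      obtain ⟨y, rfl⟩ := Submodule.Quotient.mk_surjective _ x
      rw [← Submodule.Quotient.mk_smul, Submodule.Quotient.mk_eq_zero]
      show ((algebraMap O A (r : O) * z) • y : ↥MM).1 ∈ AA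
      have hcoe : (((algebraMap O A (r : O) * z) • y : ↥MM) : K)
          = z • (algebraMap O K (r : O) * (y : K)) := by
        rw [Submodule.coe_smul, mul_comm, mul_smul, Algebra.smul_def (algebraMap O A (r : O)),
          ← IsScalarTower.algebraMap_apply]
      rw [hcoe]
      exact AA.smul_mem z (hrMM _ y.2)
    exact mlen_lt_top_of_pow_torsion (IsLocalRing.maximalIdeal A) n _ htor
  -- the spans match under the embedding
  have hXspan : ∀ x : O, Submodule.map (LinearMap.mulLeft A (algebraMap O K x)) AA
      = Submodule.map lin (Ideal.span {algebraMap O A x}) := by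
    intro x
    ext z
    simp only [Submodule.mem_map, LinearMap.mem_range, LinearMap.mulLeft_apply, hAA]
    constructor
    · rintro ⟨w, ⟨y, rfl⟩, rfl⟩
      refine ⟨algebraMap O A x * y, Ideal.mem_span_singleton.mpr ⟨y, rfl⟩, ?_⟩
      rw [hlin, Algebra.linearMap_apply, Algebra.linearMap_apply, map_mul,
        ← IsScalarTower.algebraMap_apply]
    · rintro ⟨w, hw, rfl⟩
      obtain ⟨y, rfl⟩ := Ideal.mem_span_singleton.mp hw
      refine ⟨lin y, ⟨y, rfl⟩, ?_⟩
      rw [hlin, Algebra.linearMap_apply, Algebra.linearMap_apply, map_mul,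
        ← IsScalarTower.algebraMap_apply]
  -- glue: the abstract quotient equals the subquotient of K
  have hglue : ∀ x : O, mlen A (A ⧸ Ideal.span {algebraMap O A x})
      = qlen AA (Submodule.map (LinearMap.mulLeft A (algebraMap O K x)) AA) := by
    intro x
    have hψinj : Function.Injective lin := hinj
    have hcomp : AA.subtype ∘ₗ ((LinearEquiv.ofInjective lin hψinj) : A →ₗ[A] ↥AA) = lin := by
      ext y
      simp
    have hmap : Submodule.map ((LinearEquiv.ofInjective lin hψinj) : A →ₗ[A] ↥AA)
        (Ideal.span {algebraMap O A x})
        = (Submodule.map (LinearMap.mulLeft A (algebraMap O K x)) AA).comap AA.subtype := by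
      apply Submodule.map_injective_of_injective (Submodule.injective_subtype AA)
      rw [Submodule.map_comap_subtype, ← Submodule.map_comp, hcomp,
        inf_of_le_right (hstable x AA), hXspan x]
    exact mlen_congr (Submodule.Quotient.equiv _ _ (LinearEquiv.ofInjective lin hψinj) hmap)
  -- the key cancellation
  have hmainU : ∀ x : O, x ≠ 0 →
      qlen AA (Submodule.map (LinearMap.mulLeft A (algebraMap O K x)) AA)
      = qlen MM (Submodule.map (LinearMap.mulLeft A (algebraMap O K x)) MM) := by
    intro x hx
    have hxK : algebraMap O K x ≠ 0 :=
      fun h0 => hx ((IsFractionRing.to_map_eq_zero_iff (K := K)).mp h0)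
    have h3 : qlen (Submodule.map (LinearMap.mulLeft A (algebraMap O K x)) MM)
        (Submodule.map (LinearMap.mulLeft A (algebraMap O K x)) AA) = qlen MM AA := by
      have h4 := qlen_map (mulEquiv (A := A) (algebraMap O K x) hxK) MM AA
      rwa [mulEquiv_coe] at h4
    have hsub1 : Submodule.map (LinearMap.mulLeft A (algebraMap O K x)) AA
        ≤ Submodule.map (LinearMap.mulLeft A (algebraMap O K x)) MM := Submodule.map_mono hAAle
    have e1 := qlen_add hsub1 (hstable x MM)
    have e2 := qlen_add (hstable x AA) hAAle
    rw [h3] at e1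
    have e3 : qlen MM (Submodule.map (LinearMap.mulLeft A (algebraMap O K x)) MM) + qlen MM AA
        = qlen AA (Submodule.map (LinearMap.mulLeft A (algebraMap O K x)) AA) + qlen MM AA := by
      rw [← e1, e2]; ring
    exact (WithTop.add_right_cancel hfinite.ne e3).symm
  -- final computation
  have hfinal : mlen A (A ⧸ Ideal.span {algebraMap O A c})
      = mlen A (A ⧸ Ideal.span {algebraMap O A d}) := by
    rw [hglue c, hglue d, hmainU c hc0, hmainU d hd, hcdMM]
  have hlenQ : lenQ O p c = lenQ O p d := by
    unfold lenQ
    rw [lenO_krull, lenO_krull]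
    exact congrArg ENat.toNat hfinal
  exact hlenQ


end ChowPaper
end
end

section
/- Let O be a one-dimensional noetherian domain with normalization Õ finite over O, and let f_* : Div(Õ) → Div(O) be the push-forward Σ a_P · P ↦ Σ a_P · deg_{P∩O}(P) · (P∩O). Let p₁,…,p_r be the non-invertible maximal ideals of O, and for each i let P_{i,1},…,P_{i,r_i} be the maximal ideals of Õ over p_i with degrees d_{i,j} = [Õ/P_{i,j} : O/p_i], and g_i = gcd(d_{i,1},…,d_{i,r_i}). Then the image of f_* equals { Σ_p a_p p ∈ Div(O) : g_i divides a_{p_i} for all i }, the kernel equals { Σ_{i,j} a_{i,j} P_{i,j} : Σ_j a_{i,j} d_{i,j} = 0 for all i }, the cokernel of f_* is isomorphic to ∏_{i=1}^r ℤ/g_iℤ, and f_* is injective if and only if r_i = 1 for all i. -/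
set_option maxHeartbeats 1000000
set_option synthInstance.maxHeartbeats 400000

noncomputable section
namespace ChowPaper


open scoped nonZeroDivisors

open scoped nonZeroDivisors

section Conductor
variable (O : Type*) [CommRing O] [IsDomain O] (K : Type*) [Field K] [Algebra O K]

/-- The conductor `F = {x ∈ K : x·Õ ⊆ O}` of `O`, as an ideal of the
normalization `Õ = integralClosure O K`. -/
def conductorIdeal : Ideal (integralClosure O K) where
  carrier := {x | ∀ y : integralClosure O K, ((x * y : integralClosure O K) : K) ∈ (algebraMap O K).range}
  add_mem' := by
    intro a b ha hb y
    have h : (a + b) * y = a * y + b * y := by ring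
    rw [h, Subalgebra.coe_add]
    exact add_mem (ha y) (hb y)
  zero_mem' := by
    intro y
    rw [zero_mul, Subalgebra.coe_zero]
    exact zero_mem _
  smul_mem' := by
    intro c x hx y
    have h : c • x * y = x * (c * y) := by rw [smul_eq_mul]; ring
    rw [h]
    exact hx (c * y)

/-- Pulling back a maximal ideal of the normalization to a maximal ideal of `O`. -/
def comapMax (P : MaximalSpectrum (integralClosure O K)) : MaximalSpectrum O :=
  ⟨P.asIdeal.comap (algebraMap O (integralClosure O K)),
    @Ideal.isMaximal_comap_of_isIntegral_of_isMaximal O _ (integralClosure O K) _ _ _ P.asIdeal P.2⟩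

/-- The push-forward `f_* : Div(Õ) → Div(O)`, sending a maximal ideal `P` to
`deg(P) · (P ∩ O)`. -/
def pushforward : Div (integralClosure O K) →+ Div O :=
  Finsupp.liftAddHom fun P =>
    zmultiplesHom _ (Finsupp.single (comapMax O K P)
      (resDeg O (integralClosure O K) P.asIdeal : ℤ))
end Conductor


section Helpers
open Finsupp

variable (O : Type*) [CommRing O] [IsDomain O] (K : Type*) [Field K] [Algebra O K]
  [IsFractionRing O K]

omit [IsDomain O] in
lemma injf : Function.Injective (algebraMap O (integralClosure O K)) := by
  intro a b h
  apply IsFractionRing.injective O K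
  exact congrArg Subtype.val h

instance : Algebra.IsIntegral O (integralClosure O K) :=
  ⟨integralClosure.isIntegral⟩

lemma exists_above' (p : Ideal O) [p.IsMaximal] :
    ∃ P : Ideal (integralClosure O K), P.IsMaximal ∧
      P.comap (algebraMap O (integralClosure O K)) = p := by
  apply Ideal.exists_ideal_over_maximal_of_isIntegral
  rw [(RingHom.injective_iff_ker_eq_bot _).mp (injf O K)]
  exact bot_le

omit [IsDomain O] [IsFractionRing O K] in
lemma resDeg_pos [Module.Finite O (integralClosure O K)]
    (P : Ideal (integralClosure O K)) [P.IsMaximal] :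
    0 < resDeg O (integralClosure O K) P := by
  haveI : (P.comap (algebraMap O (integralClosure O K))).IsMaximal :=
    Ideal.isMaximal_comap_of_isIntegral_of_isMaximal (R := O) (S := integralClosure O K) P
  unfold resDeg
  letI : Algebra (O ⧸ P.comap (algebraMap O (integralClosure O K))) (integralClosure O K ⧸ P) :=
    (Ideal.quotientMap P (algebraMap O (integralClosure O K)) le_rfl).toAlgebra
  haveI : IsScalarTower O (O ⧸ P.comap (algebraMap O (integralClosure O K)))
      (integralClosure O K ⧸ P) := IsScalarTower.of_algebraMap_eq fun x => rfl
  haveI : Module.Finite O (integralClosure O K ⧸ P) :=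
    Module.Finite.of_surjective (Ideal.Quotient.mkₐ O P).toLinearMap
      Ideal.Quotient.mk_surjective
  haveI : Module.Finite (O ⧸ P.comap (algebraMap O (integralClosure O K)))
      (integralClosure O K ⧸ P) :=
    Module.Finite.of_restrictScalars_finite O _ _
  haveI : Nontrivial (integralClosure O K ⧸ P) :=
    Ideal.Quotient.nontrivial_iff.mpr (Ideal.IsMaximal.ne_top ‹_›)
  letI : Field (O ⧸ P.comap (algebraMap O (integralClosure O K))) :=
    Ideal.Quotient.field _
  exact Module.finrank_pos

lemma good (p : Ideal O) [p.IsMaximal]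
    (hp : p ⊔ (conductorIdeal O K).comap (algebraMap O (integralClosure O K)) = ⊤) :
    ∃ P : Ideal (integralClosure O K), P.IsMaximal ∧
      P.comap (algebraMap O (integralClosure O K)) = p ∧
      resDeg O (integralClosure O K) P = 1 ∧
      ∀ Q : Ideal (integralClosure O K), Q.IsMaximal →
        Q.comap (algebraMap O (integralClosure O K)) = p → Q = P := by
  have h1 : (1 : O) ∈ p ⊔ (conductorIdeal O K).comap (algebraMap O (integralClosure O K)) := by
    rw [hp]; trivial
  obtain ⟨a, ha, c, hc, hac⟩ := Submodule.mem_sup.mp h1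
  have hc' : ∀ y : integralClosure O K,
      ((algebraMap O (integralClosure O K) c * y : integralClosure O K) : K)
        ∈ (algebraMap O K).range := fun y => (Ideal.mem_comap.mp hc) y
  have hdec : ∀ y : integralClosure O K, ∃ o : O,
      y - algebraMap O (integralClosure O K) o
        ∈ p.map (algebraMap O (integralClosure O K)) := by
    intro y
    obtain ⟨o, ho⟩ := hc' y
    refine ⟨o, ?_⟩
    have hco : algebraMap O (integralClosure O K) c * y
        = algebraMap O (integralClosure O K) o := by
      apply Subtype.ext
      exact ho.symm
    have hsum : algebraMap O (integralClosure O K) a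
        + algebraMap O (integralClosure O K) c = 1 := by
      rw [← map_add, hac, map_one]
    have hy : y - algebraMap O (integralClosure O K) o
        = algebraMap O (integralClosure O K) a * y := by
      rw [← hco]; linear_combination (-y) * hsum
    rw [hy]
    exact Ideal.mul_mem_right y _ (Ideal.mem_map_of_mem _ ha)
  obtain ⟨P, hPmax, hPcomap⟩ := exists_above' O K p
  have hmaple : p.map (algebraMap O (integralClosure O K)) ≤ P :=
    Ideal.map_le_iff_le_comap.mpr (le_of_eq hPcomap.symm)
  have huniq : ∀ Q : Ideal (integralClosure O K), Q.IsMaximal →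
      Q.comap (algebraMap O (integralClosure O K)) = p →
      Q = p.map (algebraMap O (integralClosure O K)) := by
    intro Q _ hQ
    apply le_antisymm
    · intro y hy
      obtain ⟨o, ho⟩ := hdec y
      have hmaple' : p.map (algebraMap O (integralClosure O K)) ≤ Q :=
        Ideal.map_le_iff_le_comap.mpr (le_of_eq hQ.symm)
      have hfo : algebraMap O (integralClosure O K) o ∈ Q := by
        have : y - (y - algebraMap O (integralClosure O K) o) ∈ Q :=
          Ideal.sub_mem _ hy (hmaple' ho)
        simpa using this
      have hop : o ∈ p := hQ ▸ Ideal.mem_comap.mpr hfo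
      have : y = (y - algebraMap O (integralClosure O K) o)
          + algebraMap O (integralClosure O K) o := by ring
      rw [this]
      exact Ideal.add_mem _ ho (Ideal.mem_map_of_mem _ hop)
    · exact Ideal.map_le_iff_le_comap.mpr (le_of_eq hQ.symm)
  have hPeq : P = p.map (algebraMap O (integralClosure O K)) := huniq P hPmax hPcomap
  refine ⟨P, hPmax, hPcomap, ?_, fun Q hQm hQc => (huniq Q hQm hQc).trans hPeq.symm⟩
  haveI : (P.comap (algebraMap O (integralClosure O K))).IsMaximal := hPcomap ▸ ‹p.IsMaximal›
  unfold resDeg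
  letI : Algebra (O ⧸ P.comap (algebraMap O (integralClosure O K))) (integralClosure O K ⧸ P) :=
    (Ideal.quotientMap P (algebraMap O (integralClosure O K)) le_rfl).toAlgebra
  haveI : Nontrivial (integralClosure O K ⧸ P) :=
    Ideal.Quotient.nontrivial_iff.mpr (Ideal.IsMaximal.ne_top hPmax)
  have hbij : Function.Bijective
      (Ideal.quotientMap P (algebraMap O (integralClosure O K)) le_rfl) := by
    letI : Field (O ⧸ P.comap (algebraMap O (integralClosure O K))) :=
      Ideal.Quotient.field _
    constructor
    · exact RingHom.injective _
    · intro z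
      obtain ⟨y, rfl⟩ := Ideal.Quotient.mk_surjective z
      obtain ⟨o, ho⟩ := hdec y
      refine ⟨Ideal.Quotient.mk _ o, ?_⟩
      rw [Ideal.quotientMap_mk]
      rw [Ideal.Quotient.mk_eq_mk_iff_sub_mem]
      have : algebraMap O (integralClosure O K) o - y
          = -(y - algebraMap O (integralClosure O K) o) := by ring
      rw [this]
      exact neg_mem (hmaple ho)
  let e := LinearEquiv.ofBijective
    (Algebra.linearMap (O ⧸ P.comap (algebraMap O (integralClosure O K)))
      (integralClosure O K ⧸ P)) hbij
  rw [← e.finrank_eq]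
  exact Module.finrank_self _

omit [IsFractionRing O K] in
lemma push_single (P : MaximalSpectrum (integralClosure O K)) (n : ℤ) :
    pushforward O K (Finsupp.single P n)
      = Finsupp.single (comapMax O K P) (n * (resDeg O (integralClosure O K) P.asIdeal : ℤ)) := by
  rw [pushforward, Finsupp.liftAddHom_apply_single]
  show n • Finsupp.single (comapMax O K P) (resDeg O (integralClosure O K) P.asIdeal : ℤ) = _
  rw [Finsupp.smul_single, smul_eq_mul]

omit [IsFractionRing O K] in
lemma push_apply
    (above : MaximalSpectrum O → Finset (MaximalSpectrum (integralClosure O K)))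
    (habove : ∀ (p : MaximalSpectrum O) (P : MaximalSpectrum (integralClosure O K)),
      P ∈ above p ↔ comapMax O K P = p)
    (D : Div (integralClosure O K)) (p : MaximalSpectrum O) :
    pushforward O K D p
      = ∑ P ∈ above p, D P * (resDeg O (integralClosure O K) P.asIdeal : ℤ) := by
  classical
  have h1 : pushforward O K D
      = D.sum fun P a => Finsupp.single (comapMax O K P)
          (a * (resDeg O (integralClosure O K) P.asIdeal : ℤ)) := by
    rw [pushforward, Finsupp.liftAddHom_apply]
    refine Finsupp.sum_congr fun P _ => ?_
    show (D P) • Finsupp.single (comapMax O K P) (resDeg O (integralClosure O K) P.asIdeal : ℤ) = _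
    rw [Finsupp.smul_single, smul_eq_mul]
  rw [h1, Finsupp.sum_apply]
  rw [Finsupp.sum]
  have h2 : ∀ P ∈ D.support,
      (Finsupp.single (comapMax O K P)
        (D P * (resDeg O (integralClosure O K) P.asIdeal : ℤ))) p
      = if comapMax O K P = p then D P * (resDeg O (integralClosure O K) P.asIdeal : ℤ) else 0 :=
    fun P _ => Finsupp.single_apply
  rw [Finset.sum_congr rfl h2, Finset.sum_ite, Finset.sum_const_zero, add_zero]
  apply Finset.sum_subset
  · intro P hP
    rw [Finset.mem_filter] at hP
    exact (habove p P).mpr hP.2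
  · intro P hP hnP
    have : D P = 0 := by
      by_contra h
      exact hnP (Finset.mem_filter.mpr ⟨Finsupp.mem_support_iff.mpr h, (habove p P).mp hP⟩)
    rw [this, zero_mul]

lemma bezout {α : Type*} [DecidableEq α] (s : Finset α) (d : α → ℕ) :
    ∃ c : α → ℤ, ∑ P ∈ s, c P * (d P : ℤ) = ((s.gcd d : ℕ) : ℤ) := by
  classical
  induction s using Finset.induction_on with
  | empty => exact ⟨0, by simp⟩
  | @insert a s ha ih =>
    obtain ⟨c, hc⟩ := ih
    refine ⟨Function.update (fun P => Nat.gcdB (d a) (s.gcd d) * c P) a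
      (Nat.gcdA (d a) (s.gcd d)), ?_⟩
    rw [Finset.sum_insert ha, Function.update_self,
      Finset.sum_congr rfl (fun P hP => by
        rw [Function.update_of_ne (by rintro rfl; exact ha hP)]),
      Finset.gcd_insert]
    have h1 : ((gcd (d a) (s.gcd d) : ℕ) : ℤ) = ((Nat.gcd (d a) (s.gcd d) : ℕ) : ℤ) := by
      norm_cast
    rw [h1, Nat.gcd_eq_gcd_ab]
    have h2 : ∑ P ∈ s, Nat.gcdB (d a) (s.gcd d) * c P * (d P : ℤ)
        = Nat.gcdB (d a) (s.gcd d) * ∑ P ∈ s, c P * (d P : ℤ) := by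
      rw [Finset.mul_sum]; exact Finset.sum_congr rfl fun P _ => by ring
    rw [h2, hc]
    ring

def phiMap (bad : Finset (MaximalSpectrum O))
    (above : MaximalSpectrum O → Finset (MaximalSpectrum (integralClosure O K))) :
    Div O →+ ((p : bad) → ZMod ((above (p : MaximalSpectrum O)).gcd
      fun P => resDeg O (integralClosure O K) P.asIdeal)) where
  toFun D := fun p => ((D (p : MaximalSpectrum O) : ℤ) : ZMod _)
  map_zero' := by funext p; simp
  map_add' D E := by funext p; simp

omit [IsDomain O] [IsFractionRing O K] in
lemma phiMap_apply (bad : Finset (MaximalSpectrum O))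
    (above : MaximalSpectrum O → Finset (MaximalSpectrum (integralClosure O K)))
    (D : Div O) (p : bad) :
    phiMap O K bad above D p = ((D (p : MaximalSpectrum O) : ℤ) : ZMod _) := rfl

omit [IsDomain O] [IsFractionRing O K] in
lemma phiMap_surjective (bad : Finset (MaximalSpectrum O))
    (above : MaximalSpectrum O → Finset (MaximalSpectrum (integralClosure O K))) :
    Function.Surjective (phiMap O K bad above) := by
  classical
  intro v
  have hex : ∀ p : bad, ∃ z : ℤ, ((z : ℤ) : ZMod ((above (p : MaximalSpectrum O)).gcd
      fun P => resDeg O (integralClosure O K) P.asIdeal)) = v p :=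
    fun p => ZMod.intCast_surjective (v p)
  choose z hz using hex
  refine ⟨∑ p ∈ bad.attach, Finsupp.single (p : MaximalSpectrum O) (z p), ?_⟩
  funext q
  rw [phiMap_apply, Finset.sum_apply']
  have hterm : ∀ p ∈ bad.attach,
      (Finsupp.single (p : MaximalSpectrum O) (z p)) (q : MaximalSpectrum O)
        = if p = q then z p else 0 := by
    intro p _
    rw [Finsupp.single_apply]
    by_cases h : p = q
    · subst h; simp
    · rw [if_neg (fun hv => h (Subtype.ext hv)), if_neg h]
  rw [Finset.sum_congr rfl hterm, Finset.sum_ite_eq' bad.attach q z,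
    if_pos (Finset.mem_attach _ _), hz]

end Helpers


lemma single_sum {α : Type*} {M : Type*} [AddCommMonoid M] {ι : Type*} (s : Finset ι)
    (p : α) (f : ι → M) :
    Finsupp.single p (∑ i ∈ s, f i) = ∑ i ∈ s, Finsupp.single p (f i) :=
  map_sum (Finsupp.singleAddHom p) f s

theorem stmt5 (O : Type*) [CommRing O] [IsDomain O] [IsNoetherianRing O] [Ring.DimensionLEOne O]
    (K : Type*) [Field K] [Algebra O K] [IsFractionRing O K]
    [Module.Finite O (integralClosure O K)]
    (bad : Finset (MaximalSpectrum O))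
    (hbad : ∀ p : MaximalSpectrum O, p ∈ bad ↔
      ¬ (p.asIdeal ⊔ (conductorIdeal O K).comap (algebraMap O (integralClosure O K)) = ⊤))
    (above : MaximalSpectrum O → Finset (MaximalSpectrum (integralClosure O K)))
    (habove : ∀ (p : MaximalSpectrum O) (P : MaximalSpectrum (integralClosure O K)),
      P ∈ above p ↔ comapMax O K P = p) :
    Set.range ⇑(pushforward O K) =
      {D : Div O | ∀ p ∈ bad,
        ((((above p).gcd fun P => resDeg O (integralClosure O K) P.asIdeal) : ℕ) : ℤ) ∣ D p} ∧
    {D : Div (integralClosure O K) |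
        (∀ P : MaximalSpectrum (integralClosure O K), comapMax O K P ∉ bad → D P = 0) ∧
        ∀ p ∈ bad, ∑ P ∈ above p, D P * (resDeg O (integralClosure O K) P.asIdeal : ℤ) = 0}
      = {D | pushforward O K D = 0} ∧
    Nonempty ((Div O ⧸ (pushforward O K).range) ≃+
      ((p : bad) → ZMod ((above p).gcd fun P => resDeg O (integralClosure O K) P.asIdeal))) ∧
    (Function.Injective ⇑(pushforward O K) ↔ ∀ p ∈ bad, (above p).card = 1) := by
  classical
  have hka : ∀ (D : Div (integralClosure O K)) (p : MaximalSpectrum O),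
      pushforward O K D p
        = ∑ P ∈ above p, D P * (resDeg O (integralClosure O K) P.asIdeal : ℤ) :=
    push_apply O K above habove
  have key : ∀ p : MaximalSpectrum O, p ∉ bad →
      ∃ P : MaximalSpectrum (integralClosure O K), above p = {P} ∧
        resDeg O (integralClosure O K) P.asIdeal = 1 := by
    intro p hp
    have hsup : p.asIdeal ⊔ (conductorIdeal O K).comap
        (algebraMap O (integralClosure O K)) = ⊤ := by
      by_contra h
      exact hp ((hbad p).mpr h)
    haveI := p.2
    obtain ⟨P, hPmax, hPcomap, hdeg, huniq⟩ := good O K p.asIdeal hsup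
    refine ⟨⟨P, hPmax⟩, ?_, hdeg⟩
    ext Q
    rw [Finset.mem_singleton, habove]
    constructor
    · intro hQ
      exact MaximalSpectrum.ext (huniq Q.asIdeal Q.2 (congrArg MaximalSpectrum.asIdeal hQ))
    · rintro rfl
      exact MaximalSpectrum.ext hPcomap
  have exmem : ∀ p : MaximalSpectrum O, ∃ P, P ∈ above p := by
    intro p
    haveI := p.2
    obtain ⟨P, hm, hcp⟩ := exists_above' O K p.asIdeal
    exact ⟨⟨P, hm⟩, (habove _ _).mpr (MaximalSpectrum.ext hcp)⟩
  have hdegpos : ∀ P : MaximalSpectrum (integralClosure O K),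
      0 < resDeg O (integralClosure O K) P.asIdeal := by
    intro P
    haveI := P.2
    exact resDeg_pos O K P.asIdeal
  -- Part 1
  have part1 : Set.range ⇑(pushforward O K) = {D : Div O | ∀ p ∈ bad,
      ((((above p).gcd fun P => resDeg O (integralClosure O K) P.asIdeal) : ℕ) : ℤ) ∣ D p} := by
    apply Set.eq_of_subset_of_subset
    · rintro D ⟨E, rfl⟩ p hp
      rw [hka E p]
      exact Finset.dvd_sum fun P hP =>
        Dvd.dvd.mul_left (Int.natCast_dvd_natCast.mpr (Finset.gcd_dvd hP)) (E P)
    · intro D hD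
      have hsingle : ∀ (p : MaximalSpectrum O) (n : ℤ),
          (p ∈ bad →
            ((((above p).gcd fun P => resDeg O (integralClosure O K) P.asIdeal) : ℕ) : ℤ) ∣ n) →
          Finsupp.single p n ∈ (pushforward O K).range := by
        intro p n hn
        by_cases hp : p ∈ bad
        · obtain ⟨c, hc⟩ := bezout (above p)
            (fun P => resDeg O (integralClosure O K) P.asIdeal)
          have hgd := hn hp
          refine ⟨∑ P ∈ above p, Finsupp.single P
            ((n / ((((above p).gcd fun P => resDeg O (integralClosure O K) P.asIdeal) : ℕ) : ℤ))
              * c P), ?_⟩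
          rw [map_sum]
          have hcongr : ∀ P ∈ above p,
              pushforward O K (Finsupp.single P
                ((n / ((((above p).gcd fun P =>
                    resDeg O (integralClosure O K) P.asIdeal) : ℕ) : ℤ)) * c P))
              = Finsupp.single p
                ((n / ((((above p).gcd fun P =>
                    resDeg O (integralClosure O K) P.asIdeal) : ℕ) : ℤ))
                  * (c P * (resDeg O (integralClosure O K) P.asIdeal : ℤ))) := by
            intro P hP
            rw [push_single, (habove p P).mp hP, mul_assoc]
          rw [Finset.sum_congr rfl hcongr, ← single_sum, ← Finset.mul_sum, hc,
            Int.ediv_mul_cancel hgd]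
        · obtain ⟨P, hPs, hdeg⟩ := key p hp
          have hPm : P ∈ above p := hPs ▸ Finset.mem_singleton_self P
          refine ⟨Finsupp.single P n, ?_⟩
          rw [push_single, (habove p P).mp hPm, hdeg]
          simp
      have hmem : D ∈ (pushforward O K).range := by
        rw [← Finsupp.sum_single D, Finsupp.sum]
        exact AddSubgroup.sum_mem _ fun p hp => hsingle p (D p) (fun hb => hD p hb)
      obtain ⟨E, hE⟩ := hmem
      exact ⟨E, hE⟩
  refine ⟨part1, ?_, ?_, ?_⟩
  -- Part 2
  · ext D
    simp only [Set.mem_setOf_eq]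
    constructor
    · rintro ⟨h1, h2⟩
      apply Finsupp.ext
      intro p
      rw [Finsupp.coe_zero, Pi.zero_apply, hka]
      by_cases hp : p ∈ bad
      · exact h2 p hp
      · apply Finset.sum_eq_zero
        intro P hP
        have hcm := (habove p P).mp hP
        rw [h1 P (by rw [hcm]; exact hp), zero_mul]
    · intro h
      constructor
      · intro P hP
        obtain ⟨P0, hs, hdeg⟩ := key (comapMax O K P) hP
        have hmem : P ∈ above (comapMax O K P) := (habove _ _).mpr rfl
        have hPP0 : P = P0 := Finset.mem_singleton.mp (hs ▸ hmem)
        subst hPP0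
        have h0 : pushforward O K D (comapMax O K P) = 0 := by rw [h]; rfl
        rw [hka, hs, Finset.sum_singleton, hdeg] at h0
        simpa using h0
      · intro p hp
        rw [← hka, h]
        rfl
  -- Part 3
  · have hker : (pushforward O K).range = (phiMap O K bad above).ker := by
      ext D
      constructor
      · intro hDr
        rw [AddMonoidHom.mem_ker]
        have hDS : ∀ p ∈ bad,
            ((((above p).gcd fun P => resDeg O (integralClosure O K) P.asIdeal) : ℕ) : ℤ)
              ∣ D p := by
          have hmem : D ∈ Set.range ⇑(pushforward O K) := by
            obtain ⟨E, hE⟩ := hDr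
            exact ⟨E, hE⟩
          rw [part1] at hmem
          exact hmem
        funext p
        rw [phiMap_apply, Pi.zero_apply, ZMod.intCast_zmod_eq_zero_iff_dvd]
        exact hDS p p.2
      · intro hDk
        have hmem : D ∈ Set.range ⇑(pushforward O K) := by
          rw [part1]
          intro p hp
          have hv := congrFun (AddMonoidHom.mem_ker.mp hDk) ⟨p, hp⟩
          rw [phiMap_apply, Pi.zero_apply, ZMod.intCast_zmod_eq_zero_iff_dvd] at hv
          exact hv
        obtain ⟨E, hE⟩ := hmem
        exact ⟨E, hE⟩
    rw [hker]
    exact ⟨QuotientAddGroup.quotientKerEquivOfSurjective _ (phiMap_surjective O K bad above)⟩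
  -- Part 4
  · constructor
    · intro hinj p hp
      obtain ⟨P, hP⟩ := exmem p
      rw [Finset.card_eq_one]
      refine ⟨P, Finset.eq_singleton_iff_unique_mem.mpr ⟨hP, ?_⟩⟩
      intro Q hQ
      by_contra hne
      have hpq : comapMax O K P = p := (habove p P).mp hP
      have hqq : comapMax O K Q = p := (habove p Q).mp hQ
      have hDzero : pushforward O K
          (Finsupp.single Q (resDeg O (integralClosure O K) P.asIdeal : ℤ)
            - Finsupp.single P (resDeg O (integralClosure O K) Q.asIdeal : ℤ)) = 0 := by
        rw [map_sub, push_single, push_single, hpq, hqq, mul_comm, sub_self]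
      have hzero := hinj (by rw [hDzero, map_zero] :
        pushforward O K
          (Finsupp.single Q (resDeg O (integralClosure O K) P.asIdeal : ℤ)
            - Finsupp.single P (resDeg O (integralClosure O K) Q.asIdeal : ℤ))
          = pushforward O K 0)
      have hQval := congrArg (fun D : Div (integralClosure O K) => D Q) hzero
      simp only [Finsupp.sub_apply, Finsupp.single_eq_same, Finsupp.coe_zero,
        Pi.zero_apply] at hQval
      rw [Finsupp.single_apply, if_neg (fun h => hne h.symm)] at hQval
      have := hdegpos P
      omega
    · intro hcard
      rw [injective_iff_map_eq_zero]
      intro D h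
      apply Finsupp.ext
      intro P
      have hPmem : P ∈ above (comapMax O K P) := (habove _ _).mpr rfl
      have hsingleton : above (comapMax O K P) = {P} := by
        by_cases hp : comapMax O K P ∈ bad
        · obtain ⟨Q, hQ⟩ := Finset.card_eq_one.mp (hcard _ hp)
          rw [hQ] at hPmem ⊢
          rw [Finset.mem_singleton] at hPmem
          rw [hPmem]
        · obtain ⟨P0, hs, _⟩ := key _ hp
          rw [hs] at hPmem ⊢
          rw [Finset.mem_singleton] at hPmem
          rw [hPmem]
      have h0 : pushforward O K D (comapMax O K P) = 0 := by rw [h]; rfl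
      rw [hka, hsingleton, Finset.sum_singleton] at h0
      have hpos := hdegpos P
      rw [Finsupp.coe_zero, Pi.zero_apply]
      rcases mul_eq_zero.mp h0 with h' | h'
      · exact h'
      · exfalso
        omega

end ChowPaper
end
end

section
/- Let O be a one-dimensional noetherian domain with normalization Õ finite over O. The canonical homomorphism Pic(O) → Cl(Õ), [a] ↦ [aÕ], is surjective. -/
set_option maxHeartbeats 1000000
set_option synthInstance.maxHeartbeats 400000

noncomputable section
namespace ChowPaper


open scoped nonZeroDivisors

open scoped nonZeroDivisors

open scoped nonZeroDivisors

section Extend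
variable (O : Type*) [CommRing O] [IsDomain O] (K : Type*) [Field K] [Algebra O K]
  [IsFractionRing O K]

/-- Extension of a fractional `O`-ideal to a fractional ideal over the
normalization `Õ = integralClosure O K`, i.e. `a ↦ aÕ`. -/
def extendFI (I : FractionalIdeal (nonZeroDivisors O) K) :
    FractionalIdeal (nonZeroDivisors (integralClosure O K)) K := by
  refine ⟨Submodule.span (integralClosure O K) ((I : Submodule O K) : Set K), ?_⟩
  obtain ⟨d, hd, hI⟩ := I.isFractional
  have hinj : Function.Injective (algebraMap O (integralClosure O K)) := by
    intro x y hxy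
    apply IsFractionRing.injective O K
    rw [IsScalarTower.algebraMap_apply O (integralClosure O K) K,
      IsScalarTower.algebraMap_apply O (integralClosure O K) K y, hxy]
  refine ⟨algebraMap O (integralClosure O K) d, ?_, ?_⟩
  · refine mem_nonZeroDivisors_of_ne_zero ?_
    intro h
    have hd0 : d ≠ 0 := nonZeroDivisors.ne_zero hd
    exact hd0 (hinj (by simpa using h))
  · intro x hx
    refine Submodule.span_induction ?_ ?_ ?_ ?_ hx
    · intro y hy
      obtain ⟨z, hz⟩ := hI y hy
      refine ⟨algebraMap O (integralClosure O K) z, ?_⟩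
      rw [← IsScalarTower.algebraMap_apply O (integralClosure O K) K, hz,
        Algebra.smul_def, Algebra.smul_def, ← IsScalarTower.algebraMap_apply]
    · exact ⟨0, by simp⟩
    · rintro y z - - ⟨cy, hcy⟩ ⟨cz, hcz⟩
      exact ⟨cy + cz, by rw [map_add, hcy, hcz, smul_add]⟩
    · rintro r y - ⟨c, hc⟩
      refine ⟨r * c, ?_⟩
      simp only [Algebra.smul_def] at hc ⊢
      rw [map_mul, hc]
      ring
end Extend

/-- `D` is the divisor of the invertible fractional ideal `I`: at each maximal
ideal `p`, `I` is locally generated by some `g` and the coefficient of `D` at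
`p` is `ord_p(g)`. -/
def IsDivisorOf (O : Type*) [CommRing O] (K : Type*) [Field K] [Algebra O K]
    (I : FractionalIdeal (nonZeroDivisors O) K) (D : Div O) : Prop :=
  ∀ p : MaximalSpectrum O, ∃ g : K, g ≠ 0 ∧
    (∀ y : K, (∃ s : O, s ∉ p.asIdeal ∧ s • y ∈ (I : Submodule O K)) ↔
      (∃ s : O, s ∉ p.asIdeal ∧ ∃ c : O, s • y = c • g)) ∧
    D p = @ord O _ K _ _ p.asIdeal p.2.isPrime g




section Aux
open scoped nonZeroDivisors

open UniqueFactorizationMonoid in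
theorem exists_coprime_rep {R : Type*} [CommRing R] [IsDomain R] [IsDedekindDomain R]
    (c : ClassGroup R) (M : Ideal R) (hM : M ≠ ⊥) :
    ∃ J : (Ideal R)⁰, (J : Ideal R) ⊔ M = ⊤ ∧ ClassGroup.mk0 J = c := by
  classical
  obtain ⟨B, hB⟩ := ClassGroup.mk0_surjective (R := R) c⁻¹
  have hB0 : (B : Ideal R) ≠ ⊥ := by
    have := B.2
    rw [mem_nonZeroDivisors_iff_ne_zero] at this
    simpa using this
  by_cases htop : (B : Ideal R) * M = ⊤
  · have hMtop : M = ⊤ := top_le_iff.mp (htop ▸ Ideal.mul_le_right)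
    have hBtop : (B : Ideal R) = ⊤ := top_le_iff.mp (htop ▸ Ideal.mul_le_left)
    refine ⟨B, by rw [hMtop, sup_top_eq], ?_⟩
    have h1 : ClassGroup.mk0 B = 1 := by
      have : (B : Ideal R).IsPrincipal := ⟨⟨1, by simp [hBtop, Ideal.span_singleton_one]⟩⟩
      exact (ClassGroup.mk0_eq_one_iff B.2).mpr this
    have hc : c = 1 := by
      have := hB.symm.trans h1
      rwa [inv_eq_one] at this
    rw [h1, hc]
  · have hBM0 : (B : Ideal R) * M ≠ ⊥ := mul_ne_zero (by simpa using hB0) (by simpa using hM)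
    set s : Finset (Ideal R) := (normalizedFactors ((B : Ideal R) * M)).toFinset with hs
    have hsmem : ∀ {P : Ideal R}, P ∈ s ↔ Prime P ∧ P ∣ (B : Ideal R) * M := by
      intro P
      rw [hs, Multiset.mem_toFinset, mem_normalizedFactors_iff hBM0]
    set n : Ideal R → ℕ := fun P => (normalizedFactors (B : Ideal R)).count P with hn
    have hex : ∀ P ∈ s, ∃ x, x ∈ P ^ n P ∧ x ∉ P ^ (n P + 1) := by
      intro P hP
      obtain ⟨hPp, -⟩ := hsmem.mp hP
      haveI : P.IsPrime := Ideal.isPrime_of_prime hPp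
      obtain ⟨x, hx, hx'⟩ := SetLike.exists_of_lt
        (Ideal.pow_succ_lt_pow (by simpa using hPp.ne_zero) (n P))
      exact ⟨x, hx, hx'⟩
    choose xf hxf1 hxf2 using hex
    obtain ⟨a, ha⟩ := IsDedekindDomain.exists_forall_sub_mem_ideal (s := s) id (fun P => n P + 1)
      (fun P hP => (hsmem.mp hP).1) (fun _ _ _ _ h => h) (fun i => xf i.1 i.2)
    have hain : ∀ P (hP : P ∈ s), a ∈ P ^ n P := by
      intro P hP
      have h2 : a - xf P hP ∈ P ^ n P := Ideal.pow_le_pow_right (Nat.le_succ _) (ha P hP)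
      simpa using add_mem h2 (hxf1 P hP)
    have hanot : ∀ P (hP : P ∈ s), a ∉ P ^ (n P + 1) := by
      intro P hP h
      exact hxf2 P hP (by simpa using sub_mem h (ha P hP))
    have ha0 : a ≠ 0 := by
      have hne : s.Nonempty := by
        rw [hs]
        rw [Finset.nonempty_iff_ne_empty]
        intro hemp
        rw [Multiset.toFinset_eq_empty] at hemp
        apply htop
        rw [← prod_normalizedFactors_eq_self hBM0, hemp, Multiset.prod_zero]
        exact Ideal.one_eq_top
      obtain ⟨P, hP⟩ := hne
      intro h
      exact hanot P hP (h ▸ zero_mem _)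
    have hspan0 : Ideal.span {a} ≠ ⊥ := by simpa [Ideal.span_singleton_eq_bot] using ha0
    have hdvd : (B : Ideal R) ∣ Ideal.span {a} := by
      rw [dvd_iff_normalizedFactors_le_normalizedFactors hB0 hspan0, Multiset.le_iff_count]
      intro P
      by_cases hPB : P ∈ normalizedFactors (B : Ideal R)
      · have hPs : P ∈ s := hsmem.mpr ⟨prime_of_normalized_factor P hPB,
          dvd_mul_of_dvd_left (dvd_of_mem_normalizedFactors hPB) M⟩
        haveI : P.IsPrime := Ideal.isPrime_of_prime (prime_of_normalized_factor P hPB)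
        have : (normalizedFactors (Ideal.span {a})).count P = n P :=
          Ideal.count_normalizedFactors_eq
            ((Ideal.span_singleton_le_iff_mem _).mpr (hain P hPs))
            (fun h => hanot P hPs ((Ideal.span_singleton_le_iff_mem _).mp h))
        rw [this]
      · simp [Multiset.count_eq_zero_of_notMem hPB]
    have hpow_dvd : ∀ P ∈ s, P ^ n P ∣ (B : Ideal R) := by
      intro P hP
      have h1 : Multiset.replicate (n P) P ≤ normalizedFactors (B : Ideal R) :=
        Multiset.le_count_iff_replicate_le.mp le_rfl
      have h2 := Multiset.prod_dvd_prod_of_le h1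
      rwa [Multiset.prod_replicate, prod_normalizedFactors_eq_self hB0] at h2
    obtain ⟨J, hJ⟩ := hdvd
    have hJ0 : J ≠ ⊥ := by
      intro h
      rw [h, Submodule.mul_bot] at hJ
      exact hspan0 hJ
    have hJmem : J ∈ (Ideal R)⁰ := mem_nonZeroDivisors_iff_ne_zero.mpr (by simpa using hJ0)
    have hJM : J ⊔ M = ⊤ := by
      by_contra hne
      obtain ⟨P, hPmax, hle⟩ := Ideal.exists_le_maximal _ hne
      have hMP : M ≤ P := le_trans le_sup_right hle
      have hJP : J ≤ P := le_trans le_sup_left hle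
      have hP0 : P ≠ ⊥ := fun h => hM (le_bot_iff.mp (h ▸ hMP))
      have hPs : P ∈ s := hsmem.mpr ⟨Ideal.prime_of_isPrime hP0 hPmax.isPrime,
        dvd_mul_of_dvd_right (Ideal.dvd_iff_le.mpr hMP) _⟩
      have hmem : a ∈ P ^ (n P + 1) := by
        have h1 : Ideal.span {a} ≤ (B : Ideal R) * P := by
          rw [hJ]
          exact Ideal.mul_mono_right hJP
        have h2 : (B : Ideal R) * P ≤ P ^ (n P + 1) := by
          rw [pow_succ]
          exact Ideal.mul_mono_left (Ideal.le_of_dvd (hpow_dvd P hPs))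
        exact h2 (h1 (Ideal.mem_span_singleton_self a))
      exact hanot P hPs hmem
    refine ⟨⟨J, hJmem⟩, hJM, ?_⟩
    have hspem : Ideal.span {a} ∈ (Ideal R)⁰ :=
      mem_nonZeroDivisors_iff_ne_zero.mpr (by simpa using hspan0)
    have hmul : ClassGroup.mk0 B * ClassGroup.mk0 ⟨J, hJmem⟩ = 1 := by
      rw [← MonoidHom.map_mul]
      have : (B * ⟨J, hJmem⟩ : (Ideal R)⁰) = ⟨Ideal.span {a}, hspem⟩ := Subtype.ext hJ.symm
      rw [this]
      exact (ClassGroup.mk0_eq_one_iff hspem).mpr ⟨⟨a, rfl⟩⟩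
    rw [hB] at hmul
    exact (inv_mul_eq_one.mp hmul).symm


theorem icDedekind (O : Type*) [CommRing O] [IsDomain O] [IsNoetherianRing O]
    [Ring.DimensionLEOne O] (K : Type*) [Field K] [Algebra O K] [IsFractionRing O K]
    [Module.Finite O (integralClosure O K)] [IsFractionRing (integralClosure O K) K] :
    IsDedekindDomain (integralClosure O K) := by
  haveI h1 : IsNoetherian O (integralClosure O K) :=
    isNoetherian_of_isNoetherianRing_of_finite O _
  haveI h2 : IsNoetherianRing (integralClosure O K) := isNoetherian_of_tower O h1
  haveI h4 : IsIntegrallyClosed (integralClosure O K) := by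
    rw [isIntegrallyClosed_iff K]
    intro x hx
    haveI hOint : Algebra.IsIntegral O (integralClosure O K) := Algebra.IsIntegral.of_finite O _
    have : IsIntegral O x := isIntegral_trans (A := integralClosure O K) x hx
    exact ⟨⟨x, this⟩, rfl⟩
  haveI h5 : IsDedekindRing (integralClosure O K) :=
    (isDedekindRing_iff _ K).mpr ⟨h2, inferInstance, fun hx => (isIntegrallyClosed_iff K).mp h4 hx⟩
  exact ⟨⟩

-- conductor element
theorem conductor_elt (O : Type*) [CommRing O] [IsDomain O]
    (K : Type*) [Field K] [Algebra O K] [IsFractionRing O K]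
    [Module.Finite O (integralClosure O K)] :
    ∃ f : O, f ≠ 0 ∧ ∀ a : integralClosure O K,
      ∃ o : O, algebraMap O K o
        = algebraMap O K f * algebraMap (integralClosure O K) K a := by
  obtain ⟨t, ht⟩ := Module.Finite.fg_top (R := O) (M := integralClosure O K)
  classical
  obtain ⟨b, hb⟩ := IsLocalization.exist_integer_multiples_of_finset (O⁰)
    (t.image (algebraMap (integralClosure O K) K))
  refine ⟨b, nonZeroDivisors.ne_zero b.2, ?_⟩
  have main : ∀ a : integralClosure O K,
      IsLocalization.IsInteger O
        ((b : O) • (algebraMap (integralClosure O K) K a)) := by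
    intro a
    have hmem : a ∈ Submodule.span O (t : Set (integralClosure O K)) := ht ▸ trivial
    induction hmem using Submodule.span_induction with
    | mem x hx => exact hb _ (Finset.mem_image_of_mem _ hx)
    | zero => exact ⟨0, by simp⟩
    | add x y _ _ hx hy => simpa [smul_add] using IsLocalization.isInteger_add hx hy
    | smul o x _ hx =>
      obtain ⟨c, hc⟩ := hx
      refine ⟨o * c, ?_⟩
      have hox : algebraMap (integralClosure O K) K (o • x)
          = algebraMap O K o * algebraMap (integralClosure O K) K x := by
        rw [Algebra.smul_def, map_mul, ← IsScalarTower.algebraMap_apply]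
      rw [map_mul, hc, hox, Algebra.smul_def, Algebra.smul_def]
      ring
  intro a
  obtain ⟨o, ho⟩ := main a
  exact ⟨o, by rw [ho, Algebra.smul_def]⟩

end Aux

theorem stmt11 (O : Type*) [CommRing O] [IsDomain O] [IsNoetherianRing O] [Ring.DimensionLEOne O]
    (K : Type*) [Field K] [Algebra O K] [IsFractionRing O K]
    [Module.Finite O (integralClosure O K)]
    [IsFractionRing (integralClosure O K) K] :
    ∀ c : ClassGroup (integralClosure O K),
      ∃ (I : (FractionalIdeal (nonZeroDivisors O) K)ˣ)
        (J : (FractionalIdeal (nonZeroDivisors (integralClosure O K)) K)ˣ),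
        (J : FractionalIdeal (nonZeroDivisors (integralClosure O K)) K) = extendFI O K ↑I ∧
        ClassGroup.mk K J = c := by
  classical
  haveI hDed : IsDedekindDomain (integralClosure O K) := icDedekind O K
  intro c
  obtain ⟨f, hf0, hf⟩ := conductor_elt O K
  have hfA : ∀ a : integralClosure O K, ∃ o : O,
      algebraMap O (integralClosure O K) o = algebraMap O (integralClosure O K) f * a := by
    intro a
    obtain ⟨o, ho⟩ := hf a
    refine ⟨o, IsFractionRing.injective (integralClosure O K) K ?_⟩
    rw [map_mul, ← IsScalarTower.algebraMap_apply, ← IsScalarTower.algebraMap_apply]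
    exact ho
  have hfne : algebraMap O (integralClosure O K) f ≠ 0 := by
    intro h
    apply hf0
    have h2 := congrArg (algebraMap (integralClosure O K) K) h
    rw [← IsScalarTower.algebraMap_apply, map_zero] at h2
    exact IsFractionRing.injective O K (by simpa using h2)
  have hM0 : (Ideal.span {algebraMap O (integralClosure O K) f} :
      Ideal (integralClosure O K)) ≠ ⊥ := by
    simpa [Ideal.span_singleton_eq_bot] using hfne
  obtain ⟨J, hJM, hJc⟩ := exists_coprime_rep c _ hM0
  have h1mem : (1 : integralClosure O K) ∈
      (J : Ideal (integralClosure O K)) ⊔ Ideal.span {algebraMap O (integralClosure O K) f} := by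
    rw [hJM]; exact Submodule.mem_top
  obtain ⟨j₀, hj₀, m, hm, hsum⟩ := Submodule.mem_sup.mp h1mem
  obtain ⟨y, hy⟩ := Ideal.mem_span_singleton'.mp hm
  obtain ⟨ty, hty⟩ := hfA y
  have htym : algebraMap O (integralClosure O K) ty = m := by
    rw [hty, mul_comm]; exact hy
  set i₀ : O := 1 - ty with hi₀def
  clear_value i₀
  set I : Ideal O :=
    (J : Ideal (integralClosure O K)).comap (algebraMap O (integralClosure O K)) with hIdef
  clear_value I
  have hi₀J : algebraMap O (integralClosure O K) i₀ = j₀ := by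
    rw [hi₀def, map_sub, map_one, htym]
    rw [← hsum]; ring
  have hi₀ : i₀ ∈ I := by
    rw [hIdef]; exact Ideal.mem_comap.mpr (hi₀J ▸ hj₀)
  have hmap : Ideal.map (algebraMap O (integralClosure O K)) I
      = (J : Ideal (integralClosure O K)) := by
    apply le_antisymm
    · exact Ideal.map_le_iff_le_comap.mpr hIdef.le
    · intro j hj
      obtain ⟨o, ho⟩ := hfA (y * j)
      have hfyj : algebraMap O (integralClosure O K) f * (y * j) = m * j := by
        rw [← hy]; ring
      have hoI : o ∈ I := by
        rw [hIdef, Ideal.mem_comap, ho, hfyj]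
        exact Ideal.mul_mem_left _ m hj
      have hdecomp : j = algebraMap O (integralClosure O K) i₀ * j
          + algebraMap O (integralClosure O K) o := by
        rw [ho, hfyj, hi₀J]
        calc j = 1 * j := (one_mul j).symm
        _ = (j₀ + m) * j := by rw [hsum]
        _ = j₀ * j + m * j := by ring
      rw [hdecomp]
      exact add_mem (Ideal.mul_mem_right _ _ (Ideal.mem_map_of_mem _ hi₀))
        (Ideal.mem_map_of_mem _ hoI)
  -- fractional ideal setup
  set Ifr : FractionalIdeal O⁰ K := (I : FractionalIdeal O⁰ K) with hIfr
  clear_value Ifr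
  set SI : Submodule O K := (Ifr : Submodule O K) with hSI
  clear_value SI
  have hSImem : ∀ x : K, x ∈ SI ↔ ∃ i ∈ I, algebraMap O K i = x := by
    intro x
    rw [hSI, hIfr, FractionalIdeal.coe_coeIdeal]
    exact IsLocalization.mem_coeSubmodule _ _
  set JU : (FractionalIdeal (integralClosure O K)⁰ K)ˣ := FractionalIdeal.mk0 K J with hJUdef
  clear_value JU
  set SJ : Submodule (integralClosure O K) K :=
    ((JU : FractionalIdeal (integralClosure O K)⁰ K) : Submodule (integralClosure O K) K)
    with hSJ
  clear_value SJ
  have hSJmem : ∀ x : K, x ∈ SJ ↔ ∃ j ∈ (J : Ideal (integralClosure O K)),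
      algebraMap (integralClosure O K) K j = x := by
    intro x
    rw [hSJ, hJUdef]
    have : ((FractionalIdeal.mk0 K J : (FractionalIdeal (integralClosure O K)⁰ K)ˣ) :
        FractionalIdeal (integralClosure O K)⁰ K)
        = ((J : Ideal (integralClosure O K)) : FractionalIdeal (integralClosure O K)⁰ K) := rfl
    rw [this, FractionalIdeal.coe_coeIdeal]
    exact IsLocalization.mem_coeSubmodule _ _
  set SJ' : Submodule (integralClosure O K) K :=
    (((JU⁻¹ : (FractionalIdeal (integralClosure O K)⁰ K)ˣ) :
      FractionalIdeal (integralClosure O K)⁰ K) : Submodule (integralClosure O K) K) with hSJ'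
  clear_value SJ'
  have hSS' : SJ * SJ' = (1 : Submodule (integralClosure O K) K) := by
    have h := JU.mul_inv
    have h2 : (((JU : FractionalIdeal (integralClosure O K)⁰ K) *
        ((JU⁻¹ : (FractionalIdeal (integralClosure O K)⁰ K)ˣ) :
          FractionalIdeal (integralClosure O K)⁰ K) :
        FractionalIdeal (integralClosure O K)⁰ K) : Submodule (integralClosure O K) K)
        = ((1 : FractionalIdeal (integralClosure O K)⁰ K) :
            Submodule (integralClosure O K) K) := by rw [h]
    rw [FractionalIdeal.coe_mul, FractionalIdeal.coe_one] at h2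
    rw [hSJ, hSJ']
    exact h2
  set SJR : Submodule O K := Submodule.restrictScalars O SJ' with hSJR
  clear_value SJR
  set spanf : Submodule O K := Submodule.span O {algebraMap O K f} with hspanf
  clear_value spanf
  set N : Submodule O K := spanf * SJR ⊔ 1 with hN
  clear_value N
  have hIJ : ∀ i ∈ I, algebraMap O (integralClosure O K) i ∈ (J : Ideal (integralClosure O K)) := by
    intro i hi
    rw [hIdef] at hi
    exact hi
  have hSJRmem : ∀ z : K, z ∈ SJR ↔ z ∈ SJ' := by
    intro z
    rw [hSJR]
    exact Submodule.restrictScalars_mem _ _ _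
  have hSIinSJ : ∀ i ∈ I, algebraMap O K i ∈ SJ := by
    intro i hi
    refine (hSJmem _).mpr ⟨algebraMap O (integralClosure O K) i, hIJ i hi, ?_⟩
    rw [← IsScalarTower.algebraMap_apply]
  have haux : ∀ j ∈ (J : Ideal (integralClosure O K)), ∀ z ∈ SJ',
      algebraMap (integralClosure O K) K j * z ∈ SI * SJR := by
    intro j hj
    rw [← hmap] at hj
    refine Submodule.span_induction ?_ ?_ ?_ ?_ hj
    · rintro x ⟨i, hi, rfl⟩ z hz
      rw [← IsScalarTower.algebraMap_apply]
      exact Submodule.mul_mem_mul ((hSImem _).mpr ⟨i, hi, rfl⟩) ((hSJRmem z).mpr hz)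
    · intro z hz; simp
    · intro x y _ _ hx hy z hz
      rw [map_add, add_mul]
      exact add_mem (hx z hz) (hy z hz)
    · intro a x _ hx z hz
      have h1 : algebraMap (integralClosure O K) K (a • x) * z
          = algebraMap (integralClosure O K) K x * (a • z) := by
        rw [smul_eq_mul, map_mul, Algebra.smul_def]; ring
      rw [h1]
      exact hx _ (SJ'.smul_mem a hz)
  have hC : SI * SJR = Submodule.restrictScalars O (1 : Submodule (integralClosure O K) K) := by
    apply le_antisymm
    · refine Submodule.mul_le.mpr ?_
      intro x hx z hz
      rw [Submodule.restrictScalars_mem, ← hSS']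
      obtain ⟨i, hi, rfl⟩ := (hSImem _).mp hx
      exact Submodule.mul_mem_mul (hSIinSJ i hi) ((hSJRmem z).mp hz)
    · intro z hz
      rw [Submodule.restrictScalars_mem, ← hSS'] at hz
      refine Submodule.mul_induction_on hz ?_ ?_
      · intro x hx y hy
        obtain ⟨j, hj, rfl⟩ := (hSJmem _).mp hx
        exact haux j hj y hy
      · intro x y hx hy; exact add_mem hx hy
  have hD : spanf * Submodule.restrictScalars O (1 : Submodule (integralClosure O K) K)
      ≤ (1 : Submodule O K) := by
    refine Submodule.mul_le.mpr ?_
    intro x hx z hz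
    rw [hspanf] at hx
    obtain ⟨o, rfl⟩ := Submodule.mem_span_singleton.mp hx
    rw [Submodule.restrictScalars_mem, Submodule.mem_one] at hz
    obtain ⟨a, rfl⟩ := hz
    obtain ⟨o2, ho2⟩ := hf a
    rw [Submodule.mem_one]
    refine ⟨o * o2, ?_⟩
    rw [map_mul, ho2, Algebra.smul_def]
    ring
  have hmain : SI * N = (1 : Submodule O K) := by
    apply le_antisymm
    · rw [hN, Submodule.mul_sup]
      refine sup_le ?_ ?_
      · have h1 : SI * (spanf * SJR) = spanf * (SI * SJR) := by
          rw [← mul_assoc, mul_comm SI spanf, mul_assoc]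
        rw [h1, hC]
        exact hD
      · rw [mul_one]
        intro x hx
        obtain ⟨i, _, rfl⟩ := (hSImem _).mp hx
        exact Submodule.mem_one.mpr ⟨i, rfl⟩
    · intro x hx
      obtain ⟨o, rfl⟩ := Submodule.mem_one.mp hx
      have hid : i₀ * (i₀ + 2*ty) + ty*ty = 1 := by rw [hi₀def]; ring
      have t1 : algebraMap O K (i₀ * (i₀ + 2*ty)) ∈ SI * N := by
        rw [map_mul]
        refine Submodule.mul_mem_mul ((hSImem _).mpr ⟨i₀, hi₀, rfl⟩) ?_
        rw [hN]
        exact le_sup_right (α := Submodule O K) (Submodule.mem_one.mpr ⟨i₀ + 2*ty, rfl⟩)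
      have hty' : algebraMap O K ty
          = algebraMap O K f * algebraMap (integralClosure O K) K y := by
        rw [IsScalarTower.algebraMap_apply O (integralClosure O K) K, hty, map_mul,
          ← IsScalarTower.algebraMap_apply]
      have t2 : algebraMap O K (ty*ty) ∈ SI * N := by
        have hyty : algebraMap (integralClosure O K) K y * algebraMap O K ty
            ∈ (1 : Submodule (integralClosure O K) K) := by
          rw [IsScalarTower.algebraMap_apply O (integralClosure O K) K ty, ← map_mul]
          exact Submodule.mem_one.mpr ⟨y * algebraMap O (integralClosure O K) ty, rfl⟩
        have heqx : algebraMap O K (ty*ty)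
            = algebraMap O K f *
              (algebraMap (integralClosure O K) K y * algebraMap O K ty) := by
          rw [map_mul, hty']; ring
        rw [heqx]
        have hmem2 : algebraMap O K f *
            (algebraMap (integralClosure O K) K y * algebraMap O K ty)
            ∈ spanf * Submodule.restrictScalars O (1 : Submodule (integralClosure O K) K) :=
          Submodule.mul_mem_mul
            (by rw [hspanf]; exact Submodule.mem_span_singleton_self _) hyty
        have heq2 : spanf * Submodule.restrictScalars O
            (1 : Submodule (integralClosure O K) K) = SI * (spanf * SJR) := by
          rw [← hC, ← mul_assoc, mul_comm spanf SI, mul_assoc]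
        rw [heq2] at hmem2
        exact mul_le_mul_right (hN ▸ le_sup_left : spanf * SJR ≤ N) SI hmem2
      have hsum2 := add_mem t1 t2
      rw [← map_add, hid, map_one] at hsum2
      have hxo : algebraMap O K o = o • (1 : K) := by rw [Algebra.smul_def, mul_one]
      rw [hxo]
      exact Submodule.smul_mem _ o hsum2
  have hfracN : IsFractional O⁰ N := by
    rw [hN]
    refine IsFractional.sup ?_ ?_
    · refine IsFractional.mul ?_ ?_
      · refine FractionalIdeal.isFractional_of_le_one _ ?_
        rw [hspanf, Submodule.span_le, Set.singleton_subset_iff]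
        exact Submodule.mem_one.mpr ⟨f, rfl⟩
      · obtain ⟨dA, hdA, hd⟩ := ((JU⁻¹ : (FractionalIdeal (integralClosure O K)⁰ K)ˣ) :
          FractionalIdeal (integralClosure O K)⁰ K).isFractional
        obtain ⟨od, hod⟩ := hfA dA
        have hodne : od ≠ 0 := by
          intro h
          rw [h, map_zero] at hod
          exact (mul_ne_zero hfne
            (nonZeroDivisors.ne_zero hdA)) hod.symm
        refine ⟨od, mem_nonZeroDivisors_of_ne_zero hodne, ?_⟩
        intro x hx
        rw [hSJRmem, hSJ'] at hx
        obtain ⟨a, ha⟩ := hd x hx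
        obtain ⟨o2, ho2⟩ := hf a
        refine ⟨o2, ?_⟩
        have h4 : od • x = algebraMap O K f * (dA • x) := by
          rw [Algebra.smul_def, Algebra.smul_def,
            IsScalarTower.algebraMap_apply O (integralClosure O K) K, hod, map_mul,
            ← IsScalarTower.algebraMap_apply, mul_assoc]
        rw [h4, ← ha]
        exact ho2
    · exact FractionalIdeal.isFractional_of_le_one _ le_rfl
  set Nfr : FractionalIdeal O⁰ K := ⟨N, hfracN⟩ with hNfrdef
  clear_value Nfr
  have hIfrS : (Ifr : Submodule O K) = SI := hSI.symm
  have hINfr : Ifr * Nfr = 1 := by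
    apply FractionalIdeal.coeToSubmodule_injective
    show ((Ifr * Nfr : FractionalIdeal O⁰ K) : Submodule O K)
      = ((1 : FractionalIdeal O⁰ K) : Submodule O K)
    rw [FractionalIdeal.coe_mul, FractionalIdeal.coe_one, hNfrdef, hIfrS]
    exact hmain
  refine ⟨Units.mkOfMulEqOne Ifr Nfr hINfr, JU, ?_, ?_⟩
  · have hval : ((Units.mkOfMulEqOne Ifr Nfr hINfr : (FractionalIdeal O⁰ K)ˣ) :
        FractionalIdeal O⁰ K) = Ifr := Units.val_mkOfMulEqOne hINfr
    rw [hval]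
    apply FractionalIdeal.coeToSubmodule_injective
    show ((JU : FractionalIdeal (integralClosure O K)⁰ K) : Submodule (integralClosure O K) K)
      = ((extendFI O K Ifr : FractionalIdeal (integralClosure O K)⁰ K) :
          Submodule (integralClosure O K) K)
    have hcoeext : ((extendFI O K Ifr : FractionalIdeal (integralClosure O K)⁰ K) :
        Submodule (integralClosure O K) K)
        = Submodule.span (integralClosure O K) ((Ifr : Submodule O K) : Set K) := rfl
    rw [hcoeext, hIfrS, ← hSJ]
    have hmap' : Submodule.span (integralClosure O K)
        ((algebraMap O (integralClosure O K)) '' (I : Set O))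
        = (J : Ideal (integralClosure O K)) := hmap
    apply le_antisymm
    · intro x hx
      obtain ⟨j, hj, rfl⟩ := (hSJmem _).mp hx
      rw [← hmap'] at hj
      refine Submodule.span_induction ?_ ?_ ?_ ?_ hj
      · rintro z ⟨i, hi, rfl⟩
        refine Submodule.subset_span ?_
        have : algebraMap (integralClosure O K) K (algebraMap O (integralClosure O K) i)
            = algebraMap O K i := (IsScalarTower.algebraMap_apply O _ K i).symm
        rw [this]
        exact (hSImem _).mpr ⟨i, hi, rfl⟩
      · simp
      · intro a b _ _ ha hb
        rw [map_add]
        exact add_mem ha hb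
      · intro a z _ hz
        have : algebraMap (integralClosure O K) K (a • z)
            = a • algebraMap (integralClosure O K) K z := by
          rw [smul_eq_mul, map_mul, Algebra.smul_def]
        rw [this]
        exact Submodule.smul_mem _ a hz
    · rw [Submodule.span_le]
      intro x hx
      obtain ⟨i, hi, rfl⟩ := (hSImem x).mp hx
      exact hSIinSJ i hi
  · rw [hJUdef, ClassGroup.mk_mk0]
    exact hJc


end ChowPaper
end
end

section
/- Let K be a number field with ring of integers Õ, let A be a nonzero ideal of Õ, and let p be a prime number with ℤ ∩ A ⊆ pℤ. Then: (1) ℤ + A is an order in K; (2) A is a conductor ideal (of some order) if and only if ℤ + A has conductor A, and in that case ℤ + A is the smallest order in K with conductor A; (3) p := pℤ + A is a maximal ideal of ℤ + A lying over p with residue field F_p; (4) if A is a conductor ideal, then p is the unique non-invertible maximal ideal of ℤ + A lying over p. -/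
set_option maxHeartbeats 1000000
set_option synthInstance.maxHeartbeats 400000

noncomputable section
namespace ChowPaper


open scoped nonZeroDivisors

open scoped nonZeroDivisors


section NF
variable (K : Type*) [Field K] [Algebra ℚ K]

/-- The conductor `{x ∈ Õ : xÕ ⊆ R}` of a subring `R` of the ring of integers
`Õ = integralClosure ℤ K`, as an ideal of `Õ`. -/
def condOf (R : Subring (integralClosure ℤ K)) : Ideal (integralClosure ℤ K) where
  carrier := {x | ∀ y : integralClosure ℤ K, x * y ∈ R}
  add_mem' := by
    intro a b ha hb y
    have h : (a + b) * y = a * y + b * y := by ring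
    rw [h]; exact add_mem (ha y) (hb y)
  zero_mem' := by intro y; rw [zero_mul]; exact zero_mem _
  smul_mem' := by
    intro c x hx y
    rw [smul_eq_mul]
    have h : c * x * y = x * (c * y) := by ring
    rw [h]; exact hx (c * y)

/-- The subring `ℤ + A` of `Õ = integralClosure ℤ K`, for an ideal `A` of `Õ`. -/
def zPlus (A : Ideal (integralClosure ℤ K)) : Subring (integralClosure ℤ K) where
  carrier := {z | ∃ m : ℤ, z - m ∈ A}
  one_mem' := ⟨1, by simp⟩
  zero_mem' := ⟨0, by simp⟩
  add_mem' := by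
    rintro a b ⟨m, hm⟩ ⟨n, hn⟩
    refine ⟨m + n, ?_⟩
    have h : a + b - ((m + n : ℤ) : integralClosure ℤ K) = (a - m) + (b - n) := by push_cast; ring
    rw [h]; exact A.add_mem hm hn
  neg_mem' := by
    rintro a ⟨m, hm⟩
    refine ⟨-m, ?_⟩
    have h : -a - ((-m : ℤ) : integralClosure ℤ K) = -(a - m) := by push_cast; ring
    rw [h]; exact A.neg_mem hm
  mul_mem' := by
    rintro a b ⟨m, hm⟩ ⟨n, hn⟩
    refine ⟨m * n, ?_⟩
    have h : a * b - ((m * n : ℤ) : integralClosure ℤ K)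
        = a * (b - n) + (n : integralClosure ℤ K) * (a - m) := by push_cast; ring
    rw [h]; exact A.add_mem (A.mul_mem_left a hn) (A.mul_mem_left _ hm)

/-- The ideal `pℤ + A` of the order `ℤ + A`. -/
def pFrak (A : Ideal (integralClosure ℤ K)) (p : ℕ) : Ideal (zPlus K A) where
  carrier := {z | ∃ m : ℤ, (z : integralClosure ℤ K) - p * m ∈ A}
  zero_mem' := ⟨0, by simp⟩
  add_mem' := by
    rintro a b ⟨m, hm⟩ ⟨n, hn⟩
    refine ⟨m + n, ?_⟩
    have h : ((a + b : zPlus K A) : integralClosure ℤ K) - p * ((m + n : ℤ) : integralClosure ℤ K)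
        = ((a : integralClosure ℤ K) - p * m) + ((b : integralClosure ℤ K) - p * n) := by
      push_cast; ring
    rw [h]; exact A.add_mem hm hn
  smul_mem' := by
    rintro c x ⟨m, hm⟩
    obtain ⟨k, hk⟩ := c.2
    refine ⟨k * m, ?_⟩
    rw [smul_eq_mul]
    have h : ((c * x : zPlus K A) : integralClosure ℤ K) - p * ((k * m : ℤ) : integralClosure ℤ K)
        = (c : integralClosure ℤ K) * ((x : integralClosure ℤ K) - p * m)
          + ((p : integralClosure ℤ K) * (m : integralClosure ℤ K)) * ((c : integralClosure ℤ K) - k) := by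
      push_cast; ring
    rw [h]; exact A.add_mem (A.mul_mem_left _ hm) (A.mul_mem_left _ hk)

/-- `R` is an order in the number field `K`: a subring of `Õ` which is finitely
generated as a `ℤ`-module and contains a `ℚ`-basis of `K`. -/
def IsOrder (R : Subring (integralClosure ℤ K)) : Prop :=
  Module.Finite ℤ R ∧
    Submodule.span ℚ (Set.range fun x : R => ((x : integralClosure ℤ K) : K)) = ⊤

end NF

/-- The Chow group of an order `R` in the number field `K`. -/
def ChowOrder (K : Type*) [Field K] [Algebra ℚ K] (R : Subring (integralClosure ℤ K)) : Type _ :=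
  @Chow R _ K _ (((algebraMap (integralClosure ℤ K) K).comp R.subtype).toAlgebra)



section Aux
variable {K : Type*} [Field K] [NumberField K]

lemma mem_zPlus_iff {A : Ideal (integralClosure ℤ K)} {z : integralClosure ℤ K} :
    z ∈ zPlus K A ↔ ∃ m : ℤ, z - m ∈ A := Iff.rfl

lemma mem_pFrak_iff {A : Ideal (integralClosure ℤ K)} {p : ℕ} {z : zPlus K A} :
    z ∈ pFrak K A p ↔ ∃ m : ℤ, (z : integralClosure ℤ K) - p * m ∈ A := Iff.rfl

lemma mem_condOf_iff {R : Subring (integralClosure ℤ K)} {x : integralClosure ℤ K} :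
    x ∈ condOf K R ↔ ∀ y, x * y ∈ R := Iff.rfl

lemma mem_zPlus_of_mem_A {A : Ideal (integralClosure ℤ K)} {a : integralClosure ℤ K}
    (ha : a ∈ A) : a ∈ zPlus K A := ⟨0, by simpa using ha⟩

lemma aux_int_mem (A : Ideal (integralClosure ℤ K)) (hA : A ≠ ⊥) :
    ∃ n : ℤ, n ≠ 0 ∧ ((n : ℤ) : integralClosure ℤ K) ∈ A := by
  let A' : Ideal (NumberField.RingOfIntegers K) := A
  refine ⟨(Ideal.absNorm A' : ℤ), ?_, ?_⟩
  · simp only [ne_eq, Int.natCast_eq_zero, Ideal.absNorm_eq_zero_iff]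
    exact hA
  · have h := Ideal.absNorm_mem A'
    exact_mod_cast h

lemma zPlus_finite (A : Ideal (integralClosure ℤ K)) : Module.Finite ℤ (zPlus K A) := by
  haveI : Module.Finite ℤ (integralClosure ℤ K) :=
    inferInstanceAs (Module.Finite ℤ (NumberField.RingOfIntegers K))
  haveI : IsNoetherian ℤ (integralClosure ℤ K) := isNoetherian_of_isNoetherianRing_of_finite ℤ _
  have h : (Subalgebra.toSubmodule (subalgebraOfSubring (zPlus K A))).FG :=
    IsNoetherian.noetherian _
  exact Module.Finite.iff_fg.mpr h

lemma zPlus_span (A : Ideal (integralClosure ℤ K)) (hA : A ≠ ⊥) :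
    Submodule.span ℚ (Set.range fun x : zPlus K A => ((x : integralClosure ℤ K) : K)) = ⊤ := by
  obtain ⟨n, hn0, hnA⟩ := aux_int_mem A hA
  rw [eq_top_iff]
  rintro z -
  have halg : IsAlgebraic ℤ z :=
    (IsFractionRing.isAlgebraic_iff ℤ ℚ K).mpr ((Algebra.IsAlgebraic.of_finite ℚ K).isAlgebraic z)
  obtain ⟨y, d, hd0, hdz⟩ : ∃ y : integralClosure ℤ K, ∃ d : ℤ, d ≠ 0 ∧
      algebraMap ℤ K d * z = (y : K) := by
    obtain ⟨d, hd0, hint⟩ := halg.exists_integral_multiple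
    exact ⟨⟨d • z, hint⟩, d, hd0, by simp [Algebra.smul_def]⟩
  have hy' : ((n : integralClosure ℤ K) * y) ∈ zPlus K A :=
    mem_zPlus_of_mem_A (A.mul_mem_right y hnA)
  have hmem : ((((n : integralClosure ℤ K) * y : integralClosure ℤ K)) : K) ∈
      Submodule.span ℚ (Set.range fun x : zPlus K A => ((x : integralClosure ℤ K) : K)) :=
    Submodule.subset_span ⟨⟨_, hy'⟩, rfl⟩
  have hdz' : ((d : ℤ) : K) * z = (y : K) := by
    rw [← hdz, algebraMap_int_eq, eq_intCast]
  have key : z = (((n * d : ℤ) : ℚ))⁻¹ •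
      ((((n : integralClosure ℤ K) * y : integralClosure ℤ K)) : K) := by
    have h1 : ((((n : integralClosure ℤ K) * y : integralClosure ℤ K)) : K)
        = ((n * d : ℤ) : K) * z := by
      push_cast
      rw [mul_assoc, hdz']
    rw [h1, Algebra.smul_def, map_inv₀, map_intCast]
    rw [inv_mul_cancel_left₀]
    exact_mod_cast mul_ne_zero hn0 hd0
  rw [key]
  exact Submodule.smul_mem _ _ hmem

lemma isOrder_zPlus (A : Ideal (integralClosure ℤ K)) (hA : A ≠ ⊥) :
    IsOrder K (zPlus K A) := ⟨zPlus_finite A, zPlus_span A hA⟩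

lemma A_le_condOf (A : Ideal (integralClosure ℤ K)) : A ≤ condOf K (zPlus K A) :=
  fun x hx => mem_condOf_iff.mpr fun y => mem_zPlus_of_mem_A (A.mul_mem_right y hx)

lemma condOf_mono {R S : Subring (integralClosure ℤ K)} (h : R ≤ S) :
    condOf K R ≤ condOf K S :=
  fun x hx => mem_condOf_iff.mpr fun y => h (mem_condOf_iff.mp hx y)

lemma condOf_le_self {R : Subring (integralClosure ℤ K)} {x : integralClosure ℤ K}
    (hx : x ∈ condOf K R) : x ∈ R := by
  simpa using mem_condOf_iff.mp hx 1

lemma zPlus_le_of_condOf_eq (A : Ideal (integralClosure ℤ K))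
    (R : Subring (integralClosure ℤ K)) (hR : condOf K R = A) : zPlus K A ≤ R := by
  intro z hz
  obtain ⟨m, hm⟩ := mem_zPlus_iff.mp hz
  rw [← hR] at hm
  have h1 : z - (m : integralClosure ℤ K) ∈ R := condOf_le_self hm
  have h2 : ((m : ℤ) : integralClosure ℤ K) ∈ R := intCast_mem R m
  have h3 : z = (z - (m : integralClosure ℤ K)) + (m : integralClosure ℤ K) := by ring
  rw [h3]
  exact R.add_mem h1 h2

lemma condOf_zPlus_eq (A : Ideal (integralClosure ℤ K))
    (hc : ∃ R : Subring (integralClosure ℤ K), IsOrder K R ∧ condOf K R = A) :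
    condOf K (zPlus K A) = A := by
  obtain ⟨R, _, hRc⟩ := hc
  refine le_antisymm ?_ (A_le_condOf A)
  have h := condOf_mono (zPlus_le_of_condOf_eq A R hRc)
  rwa [hRc] at h

lemma intCast_mem_pFrak_iff (A : Ideal (integralClosure ℤ K)) (p : ℕ)
    (hpA : A.comap (algebraMap ℤ (integralClosure ℤ K)) ≤ Ideal.span {(p : ℤ)}) (m : ℤ) :
    ((m : ℤ) : zPlus K A) ∈ pFrak K A p ↔ (p : ℤ) ∣ m := by
  constructor
  · intro h
    obtain ⟨k, hk⟩ := mem_pFrak_iff.mp h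
    have h1 : ((m - (p : ℤ) * k : ℤ) : integralClosure ℤ K) ∈ A := by
      push_cast at hk ⊢
      convert hk using 2
    have h2 : (m - (p : ℤ) * k) ∈ Ideal.span {(p : ℤ)} := hpA (by
      rw [Ideal.mem_comap, algebraMap_int_eq, eq_intCast]; exact h1)
    rw [Ideal.mem_span_singleton] at h2
    obtain ⟨c, hc⟩ := h2
    exact ⟨k + c, by linarith⟩
  · rintro ⟨c, hc⟩
    refine mem_pFrak_iff.mpr ⟨c, ?_⟩
    have h0 : (((m : ℤ) : zPlus K A) : integralClosure ℤ K)
        - (p : integralClosure ℤ K) * (c : integralClosure ℤ K) = 0 := by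
      push_cast [hc]
      ring
    rw [h0]
    exact A.zero_mem

lemma pFrak_comap (A : Ideal (integralClosure ℤ K)) (p : ℕ)
    (hpA : A.comap (algebraMap ℤ (integralClosure ℤ K)) ≤ Ideal.span {(p : ℤ)}) :
    (pFrak K A p).comap (algebraMap ℤ (zPlus K A)) = Ideal.span {(p : ℤ)} := by
  ext m
  rw [Ideal.mem_comap, algebraMap_int_eq, eq_intCast, intCast_mem_pFrak_iff A p hpA,
    Ideal.mem_span_singleton]

lemma pFrak_residue (A : Ideal (integralClosure ℤ K)) (p : ℕ)
    (hpA : A.comap (algebraMap ℤ (integralClosure ℤ K)) ≤ Ideal.span {(p : ℤ)}) :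
    Nonempty ((zPlus K A ⧸ pFrak K A p) ≃+* ZMod p) := by
  let f : ℤ →+* (zPlus K A ⧸ pFrak K A p) :=
    (Ideal.Quotient.mk (pFrak K A p)).comp (Int.castRingHom (zPlus K A))
  have hsurj : Function.Surjective f := by
    intro q
    obtain ⟨z, rfl⟩ := Ideal.Quotient.mk_surjective q
    obtain ⟨m, hm⟩ := mem_zPlus_iff.mp z.2
    refine ⟨m, ?_⟩
    have hmem : ((m : ℤ) : zPlus K A) - z ∈ pFrak K A p := by
      refine mem_pFrak_iff.mpr ⟨0, ?_⟩
      have := A.neg_mem hm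
      rw [neg_sub] at this
      push_cast
      simpa using this
    show Ideal.Quotient.mk (pFrak K A p) ((m : ℤ) : zPlus K A) = Ideal.Quotient.mk _ z
    exact Ideal.Quotient.mk_eq_mk_iff_sub_mem _ _ |>.mpr hmem
  have hker : RingHom.ker f = Ideal.span {(p : ℤ)} := by
    ext m
    rw [RingHom.mem_ker]
    have h0 : f m = Ideal.Quotient.mk (pFrak K A p) ((m : ℤ) : zPlus K A) := rfl
    rw [h0, Ideal.Quotient.eq_zero_iff_mem, intCast_mem_pFrak_iff A p hpA,
      Ideal.mem_span_singleton]
  exact ⟨((RingHom.quotientKerEquivOfSurjective hsurj).symm.trans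
    (Ideal.quotEquivOfEq hker)).trans (Int.quotientSpanNatEquivZMod p)⟩

lemma pFrak_maximal (A : Ideal (integralClosure ℤ K)) (p : ℕ) (hp : p.Prime)
    (hpA : A.comap (algebraMap ℤ (integralClosure ℤ K)) ≤ Ideal.span {(p : ℤ)}) :
    (pFrak K A p).IsMaximal := by
  haveI : Fact p.Prime := ⟨hp⟩
  obtain ⟨e⟩ := pFrak_residue A p hpA
  exact Ideal.Quotient.maximal_of_isField _ (e.toMulEquiv.isField (Field.toIsField (ZMod p)))

end Aux

theorem stmt15 (K : Type*) [Field K] [NumberField K]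
    (A : Ideal (integralClosure ℤ K)) (hA : A ≠ ⊥)
    (p : ℕ) (hp : p.Prime)
    (hpA : A.comap (algebraMap ℤ (integralClosure ℤ K)) ≤ Ideal.span {(p : ℤ)}) :
    IsOrder K (zPlus K A) ∧
    ((∃ R : Subring (integralClosure ℤ K), IsOrder K R ∧ condOf K R = A) ↔
      condOf K (zPlus K A) = A) ∧
    (condOf K (zPlus K A) = A →
      ∀ R : Subring (integralClosure ℤ K), IsOrder K R → condOf K R = A → zPlus K A ≤ R) ∧
    ((pFrak K A p).IsMaximal ∧
      (pFrak K A p).comap (algebraMap ℤ (zPlus K A)) = Ideal.span {(p : ℤ)} ∧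
      Nonempty ((zPlus K A ⧸ pFrak K A p) ≃+* ZMod p)) ∧
    ((∃ R : Subring (integralClosure ℤ K), IsOrder K R ∧ condOf K R = A) →
      (condOf K (zPlus K A)).comap (zPlus K A).subtype ≤ pFrak K A p ∧
      ∀ q : Ideal (zPlus K A), q.IsMaximal →
        q.comap (algebraMap ℤ (zPlus K A)) = Ideal.span {(p : ℤ)} →
        (condOf K (zPlus K A)).comap (zPlus K A).subtype ≤ q → q = pFrak K A p) := by
  have hord := isOrder_zPlus A hA
  refine ⟨hord, ⟨condOf_zPlus_eq A, fun h => ⟨zPlus K A, hord, h⟩⟩,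
    fun _ R _ hRc => zPlus_le_of_condOf_eq A R hRc,
    ⟨pFrak_maximal A p hp hpA, pFrak_comap A p hpA, pFrak_residue A p hpA⟩, ?_⟩
  intro hc
  have hcond : condOf K (zPlus K A) = A := condOf_zPlus_eq A hc
  constructor
  · intro x hx
    rw [Ideal.mem_comap, hcond] at hx
    refine mem_pFrak_iff.mpr ⟨0, ?_⟩
    simpa using hx
  · intro q hq hqp hqc
    have hple : pFrak K A p ≤ q := by
      intro x hx
      obtain ⟨m, hm⟩ := mem_pFrak_iff.mp hx
      have h1 : x - (((p : ℤ) * m : ℤ) : zPlus K A) ∈ q := by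
        apply hqc
        rw [Ideal.mem_comap, hcond]
        show ((x - (((p : ℤ) * m : ℤ) : zPlus K A) : zPlus K A) : integralClosure ℤ K) ∈ A
        push_cast
        convert hm using 2
      have hp' : ((p : ℤ) : zPlus K A) ∈ q := by
        have h2 : ((p : ℤ)) ∈ q.comap (algebraMap ℤ (zPlus K A)) := by
          rw [hqp]; exact Ideal.mem_span_singleton_self _
        rwa [Ideal.mem_comap, algebraMap_int_eq, eq_intCast] at h2
      have h3 : (((p : ℤ) * m : ℤ) : zPlus K A) ∈ q := by
        have := q.mul_mem_right ((m : ℤ) : zPlus K A) hp'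
        push_cast at this ⊢
        exact this
      have h4 := q.add_mem h1 h3
      simpa using h4
    exact ((pFrak_maximal A p hp hpA).eq_of_le hq.ne_top hple).symm


end ChowPaper
end
end
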